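/- Let E ∈ ℂ^{n×n} be Hermitian, F ∈ ℂ^{m×n}, and take G = 0 ∈ ℂ^{m×m}; let q ∈ ℂⁿ, r ∈ ℂᵐ, û ∈ ℂⁿ, p̂ ∈ ℂᵐ. Fix positive weights α₁, α₂, β₁, β₂. Set Q = q − Eû − F*p̂, R̂ = r − Fû, N₁ = J_S^n Φ_E D_{S,n}⁻¹, N₂ = J_SK^n Ψ_E D_{SK,n}⁻¹. Define X̂₁ = [[α₁⁻¹(ℜ(û)ᵀ⊗Iₙ)N₁, −α₁⁻¹(ℑ(û)ᵀ⊗Iₙ)N₂, α₂⁻¹(Iₙ⊗ℜ(p̂)ᵀ)Σ_F, α₂⁻¹(Iₙ⊗ℑ(p̂)ᵀ)Σ_F],[α₁⁻¹(ℑ(û)ᵀ⊗Iₙ)N₁, α₁⁻¹(ℜ(û)ᵀ⊗Iₙ)N₂, α₂⁻¹(Iₙ⊗ℑ(p̂)ᵀ)Σ_F, −α₂⁻¹(Iₙ⊗ℜ(p̂)ᵀ)Σ_F]], Ẑ = [[α₂⁻¹(ℜ(û)ᵀ⊗I_m)Σ_F, −α₂⁻¹(ℑ(û)ᵀ⊗I_m)Σ_F],[α₂⁻¹(ℑ(û)ᵀ⊗I_m)Σ_F,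 α₂⁻¹(ℜ(û)ᵀ⊗I_m)Σ_F]], Z = [0_{2m×n²}, Ẑ], I₁ = [−β₁⁻¹I_{2n}, 0_{2n×2m}], I₂ = [0_{2m×2n}, −β₂⁻¹I_{2m}], and M = [[X̂₁, I₁],[Z, I₂]]. Then MMᵀ is invertible, and the sparsity-preserving structured backward error inf{ sqrt(α₁²‖ΔE⊙Θ_E‖_F² + α₂²‖ΔF⊙Θ_F‖_F² + β₁²‖Δq‖₂² + β₂²‖Δr‖₂²) : ΔE ∈ ℂ^{n×n} Hermitian, ΔF ∈ ℂ^{m×n}, Δq ∈ ℂⁿ, Δr ∈ ℂᵐ, (E+ΔE⊙Θ_E)û + (F+ΔF⊙Θ_F)*p̂ = q+Δq and (F+ΔF⊙Θ_F)û = r+Δr } is attained and equals ‖Mᵀ(MMᵀ)⁻¹[ℜ(Q); ℑ(Q); ℜ(R̂); ℑ(R̂)]‖₂. -/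

import Mathlib

open Matrix

noncomputable section

namespace GSPPBE

/-- Entrywise real part of a complex matrix. -/
def reM {I J : Type*} (A : Matrix I J ℂ) : Matrix I J ℝ := A.map Complex.re

/-- Entrywise imaginary part of a complex matrix. -/
def imM {I J : Type*} (A : Matrix I J ℂ) : Matrix I J ℝ := A.map Complex.im

/-- Entrywise real part of a complex vector. -/
def reV {I : Type*} (v : I → ℂ) : I → ℝ := fun i => (v i).re

/-- Entrywise imaginary part of a complex vector. -/
def imV {I : Type*} (v : I → ℂ) : I → ℝ := fun i => (v i).im

/-- Frobenius norm of a matrix. -/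
def frob {I J α : Type*} [Fintype I] [Fintype J] [SeminormedAddGroup α]
    (A : Matrix I J α) : ℝ :=
  Real.sqrt (∑ i, ∑ j, ‖A i j‖ ^ 2)

/-- Euclidean norm of a (finitely indexed) vector. -/
def eunorm {I α : Type*} [Fintype I] [SeminormedAddGroup α] (v : I → α) : ℝ :=
  Real.sqrt (∑ i, ‖v i‖ ^ 2)

/-- Column-major vectorization: `vecM A (j, i) = A i j`. -/
def vecM {I J α : Type*} (A : Matrix I J α) : J × I → α := fun p => A p.2 p.1

/-- Index type for the lower triangle including the diagonal (positions of `vec_S`);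
it has `m(m+1)/2` elements. -/
abbrev SymIdx (m : ℕ) := {p : Fin m × Fin m // p.2 ≤ p.1}

/-- Index type for the strictly lower triangle (positions of `vec_SK`);
it has `m(m-1)/2` elements. -/
abbrev SkewIdx (m : ℕ) := {p : Fin m × Fin m // p.2 < p.1}

/-- `vec_S` of a (symmetric) matrix: its lower-triangular entries `Z i j`, `j ≤ i`. -/
def vecS {m : ℕ} {α : Type*} (Z : Matrix (Fin m) (Fin m) α) : SymIdx m → α :=
  fun p => Z p.1.1 p.1.2

/-- `vec_SK` of a (skew-symmetric) matrix: its strictly lower-triangular entries `Z i j`, `j < i`. -/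
def vecSK {m : ℕ} {α : Type*} (Z : Matrix (Fin m) (Fin m) α) : SkewIdx m → α :=
  fun p => Z p.1.1 p.1.2

/-- `J_S^m`: its column at position `(i,j)`, `j ≤ i`, is `vec(eᵢeⱼᵀ + eⱼeᵢᵀ)` for `i > j` and
`vec(eⱼeⱼᵀ)` for `i = j`.  Rows are vec positions `(column, row)`. -/
def JS (m : ℕ) : Matrix (Fin m × Fin m) (SymIdx m) ℝ :=
  Matrix.of fun cr p =>
    (if cr.2 = p.1.1 ∧ cr.1 = p.1.2 then (1 : ℝ) else 0) +
    (if p.1.1 ≠ p.1.2 ∧ cr.2 = p.1.2 ∧ cr.1 = p.1.1 then 1 else 0)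

/-- `J_SK^m`: its column at position `(i,j)`, `j < i`, is `vec(eᵢeⱼᵀ − eⱼeᵢᵀ)`. -/
def JSK (m : ℕ) : Matrix (Fin m × Fin m) (SkewIdx m) ℝ :=
  Matrix.of fun cr p =>
    (if cr.2 = p.1.1 ∧ cr.1 = p.1.2 then (1 : ℝ) else 0) -
    (if cr.2 = p.1.2 ∧ cr.1 = p.1.1 then 1 else 0)

open Classical in
/-- Sign pattern `Θ_X` of a matrix, with values in the same ring. -/
def theta {I J α : Type*} [Zero α] [One α] (X : Matrix I J α) : Matrix I J α :=
  Matrix.of fun i j => if X i j = 0 then 0 else 1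

open Classical in
/-- Real-valued sign pattern `Θ_X` of a matrix. -/
def thetaR {I J α : Type*} [Zero α] (X : Matrix I J α) : Matrix I J ℝ :=
  Matrix.of fun i j => if X i j = 0 then 0 else 1

/-- `Φ_X = diag(vec_S(Θ_X))`. -/
def Phi {m : ℕ} {α : Type*} [Zero α] (X : Matrix (Fin m) (Fin m) α) :
    Matrix (SymIdx m) (SymIdx m) ℝ :=
  Matrix.diagonal (vecS (thetaR X))

/-- `Ψ_X`: diagonal matrix listing the strictly lower-triangular entries of `Θ_X`
in `vec_SK` ordering. -/
def Psi {m : ℕ} {α : Type*} [Zero α] (X : Matrix (Fin m) (Fin m) α) :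
    Matrix (SkewIdx m) (SkewIdx m) ℝ :=
  Matrix.diagonal (vecSK (thetaR X))

/-- `Σ_X = diag(vec(Θ_X))`. -/
def Sig {I J α : Type*} [DecidableEq I] [DecidableEq J] [Zero α]
    (X : Matrix I J α) : Matrix (J × I) (J × I) ℝ :=
  Matrix.diagonal (vecM (thetaR X))

/-- `D_{S,m}`: diagonal entry `1` at the positions of diagonal entries `(j,j)`, `√2` elsewhere. -/
def DS (m : ℕ) : Matrix (SymIdx m) (SymIdx m) ℝ :=
  Matrix.diagonal fun p => if p.1.1 = p.1.2 then 1 else Real.sqrt 2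

/-- `D_{SK,m} = √2·I`. -/
def DSK (m : ℕ) : Matrix (SkewIdx m) (SkewIdx m) ℝ :=
  Matrix.diagonal fun _ => Real.sqrt 2

/-- `uᵀ ⊗ I_b`, viewed as a matrix acting on column-major vectorizations of `b×a` matrices. -/
def rowKronId {a b : ℕ} (u : Fin a → ℝ) : Matrix (Fin b) (Fin a × Fin b) ℝ :=
  Matrix.of fun r p => u p.1 * (if r = p.2 then 1 else 0)

/-- `I_a ⊗ vᵀ`, viewed as a matrix acting on column-major vectorizations of `b×a` matrices. -/
def idKronRow {a b : ℕ} (v : Fin b → ℝ) : Matrix (Fin a) (Fin a × Fin b) ℝ :=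
  Matrix.of fun r p => (if r = p.1 then 1 else 0) * v p.2

/-- The weighted norm `ζ^{σ₁}(A,B,C,q,r)`. -/
def zeta1 {n m : ℕ} {α : Type*} [SeminormedAddGroup α]
    (α₁ α₂ α₃ β₁ β₂ : ℝ)
    (A : Matrix (Fin n) (Fin n) α) (B : Matrix (Fin m) (Fin n) α)
    (C : Matrix (Fin m) (Fin m) α) (q : Fin n → α) (r : Fin m → α) : ℝ :=
  Real.sqrt (α₁ ^ 2 * frob A ^ 2 + α₂ ^ 2 * frob B ^ 2 + α₃ ^ 2 * frob C ^ 2 +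
    β₁ ^ 2 * eunorm q ^ 2 + β₂ ^ 2 * eunorm r ^ 2)

/-- The weighted norm `ζ^{σ₂}(A,B,H,C,q,r)`. -/
def zeta2 {n m : ℕ} {α : Type*} [SeminormedAddGroup α]
    (α₁ α₂ α₃ α₄ β₁ β₂ : ℝ)
    (A : Matrix (Fin n) (Fin n) α) (B : Matrix (Fin m) (Fin n) α)
    (H : Matrix (Fin m) (Fin n) α) (C : Matrix (Fin m) (Fin m) α)
    (q : Fin n → α) (r : Fin m → α) : ℝ :=
  Real.sqrt (α₁ ^ 2 * frob A ^ 2 + α₂ ^ 2 * frob B ^ 2 + α₃ ^ 2 * frob H ^ 2 +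
    α₄ ^ 2 * frob C ^ 2 + β₁ ^ 2 * eunorm q ^ 2 + β₂ ^ 2 * eunorm r ^ 2)


lemma eunorm_nonneg {I α : Type*} [Fintype I] [SeminormedAddGroup α] (v : I → α) :
    0 ≤ eunorm v := Real.sqrt_nonneg _

lemma eunorm_real {I : Type*} [Fintype I] (v : I → ℝ) :
    eunorm v = Real.sqrt (∑ i, v i ^ 2) := by
  simp [eunorm, Real.norm_eq_abs, sq_abs]

private lemma aux_ineq {a b c : ℝ} (h : b ^ 2 ≤ a * c) (hab : a = b) (ha : 0 ≤ a) (hc : 0 ≤ c) :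
    a ≤ c := by nlinarith

/-- Minimum-norm solution lemma. -/
lemma minNorm {p q : Type*} [Fintype p] [Fintype q] [DecidableEq p] [DecidableEq q]
    (M : Matrix p q ℝ) (w : p → ℝ) (h : IsUnit (M * Mᵀ)) :
    M *ᵥ ((Mᵀ * (M * Mᵀ)⁻¹) *ᵥ w) = w ∧
      ∀ x : q → ℝ, M *ᵥ x = w → eunorm ((Mᵀ * (M * Mᵀ)⁻¹) *ᵥ w) ≤ eunorm x := by
  have hdet : IsUnit (M * Mᵀ).det := (Matrix.isUnit_iff_isUnit_det _).mp h
  have hsolve : M *ᵥ ((Mᵀ * (M * Mᵀ)⁻¹) *ᵥ w) = w := by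
    rw [Matrix.mulVec_mulVec, ← Matrix.mul_assoc, Matrix.mul_nonsing_inv _ hdet]
    simp
  refine ⟨hsolve, ?_⟩
  intro x hx
  have hx0y : (Mᵀ * (M * Mᵀ)⁻¹) *ᵥ w = Mᵀ *ᵥ ((M * Mᵀ)⁻¹ *ᵥ w) := by
    rw [Matrix.mulVec_mulVec]
  generalize hyv : (M * Mᵀ)⁻¹ *ᵥ w = y at hx0y
  rw [hx0y] at hsolve ⊢
  generalize hx0v : Mᵀ *ᵥ y = x₀ at hsolve ⊢
  have hdot : ∀ z : q → ℝ, M *ᵥ z = w → x₀ ⬝ᵥ z = y ⬝ᵥ w := by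
    intro z hz
    rw [← hx0v, Matrix.mulVec_transpose, ← dotProduct_mulVec, hz]
  have h1 : x₀ ⬝ᵥ x₀ = y ⬝ᵥ w := hdot x₀ hsolve
  have h2 : x₀ ⬝ᵥ x = y ⬝ᵥ w := hdot x hx
  have hcs : (x₀ ⬝ᵥ x) ^ 2 ≤ (x₀ ⬝ᵥ x₀) * (x ⬝ᵥ x) := by
    have := Finset.sum_mul_sq_le_sq_mul_sq Finset.univ x₀ x
    simpa [dotProduct, pow_two] using this
  have hle : x₀ ⬝ᵥ x₀ ≤ x ⬝ᵥ x := by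
    refine aux_ineq hcs (h1.trans h2.symm) ?_ ?_ <;>
      · simp only [dotProduct, ← pow_two]; positivity
  rw [eunorm_real, eunorm_real]
  apply Real.sqrt_le_sqrt
  simpa [dotProduct, pow_two] using hle


lemma sum_symIdx {k : ℕ} (g : Fin k × Fin k → ℝ) :
    ∑ p : SymIdx k, g p.1 = ∑ p ∈ Finset.univ.filter (fun p : Fin k × Fin k => p.2 ≤ p.1), g p :=
  (Finset.sum_subtype _ (by simp) g).symm

lemma sum_skewIdx {k : ℕ} (g : Fin k × Fin k → ℝ) :
    ∑ p : SkewIdx k, g p.1 = ∑ p ∈ Finset.univ.filter (fun p : Fin k × Fin k => p.2 < p.1), g p :=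
  (Finset.sum_subtype _ (by simp) g).symm

lemma sum_swap_strict {k : ℕ} (f : Fin k → Fin k → ℝ) (hsym : ∀ i j, f i j = f j i) :
    ∑ p : Fin k × Fin k, (if p.1 < p.2 then f p.1 p.2 else 0)
      = ∑ p : Fin k × Fin k, (if p.2 < p.1 then f p.1 p.2 else 0) := by
  apply Fintype.sum_equiv (Equiv.prodComm _ _)
  intro p
  simp only [Equiv.prodComm_apply, Prod.fst_swap, Prod.snd_swap]
  rw [hsym p.2 p.1]
  rfl

lemma sum_split_sym {k : ℕ} (f : Fin k → Fin k → ℝ) (hsym : ∀ i j, f i j = f j i) :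
    ∑ i : Fin k, ∑ j : Fin k, f i j
      = ∑ p : SymIdx k, (if p.1.1 = p.1.2 then (1:ℝ) else 2) * f p.1.1 p.1.2 := by
  rw [sum_symIdx (fun p => (if p.1 = p.2 then (1:ℝ) else 2) * f p.1 p.2), Finset.sum_filter,
    ← Fintype.sum_prod_type' (f := f)]
  have key : ∀ p : Fin k × Fin k,
      (if p.2 ≤ p.1 then (if p.1 = p.2 then (1:ℝ) else 2) * f p.1 p.2 else 0)
      = f p.1 p.2
        + ((if p.2 < p.1 then f p.1 p.2 else 0) - (if p.1 < p.2 then f p.1 p.2 else 0)) := by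
    intro ⟨i, j⟩
    rcases lt_trichotomy i j with h | h | h
    · simp only [if_neg (not_le.mpr h), if_neg (asymm h), if_pos h]
      ring
    · subst h
      simp only [le_refl, if_pos, if_pos rfl, if_neg (lt_irrefl i)]
      ring
    · simp only [if_pos h.le, if_neg h.ne', if_pos h, if_neg (asymm h)]
      ring
  simp only [key, Finset.sum_add_distrib, Finset.sum_sub_distrib]
  rw [sum_swap_strict f hsym]
  ring

lemma sum_split_skew {k : ℕ} (f : Fin k → Fin k → ℝ) (hsym : ∀ i j, f i j = f j i)
    (hdiag : ∀ i, f i i = 0) :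
    ∑ i : Fin k, ∑ j : Fin k, f i j = ∑ p : SkewIdx k, 2 * f p.1.1 p.1.2 := by
  rw [sum_skewIdx (fun p => 2 * f p.1 p.2), Finset.sum_filter,
    ← Fintype.sum_prod_type' (f := f)]
  have key : ∀ p : Fin k × Fin k,
      (if p.2 < p.1 then 2 * f p.1 p.2 else 0)
      = f p.1 p.2
        + ((if p.2 < p.1 then f p.1 p.2 else 0) - (if p.1 < p.2 then f p.1 p.2 else 0)) := by
    intro ⟨i, j⟩
    rcases lt_trichotomy i j with h | h | h
    · simp only [if_neg (asymm h), if_pos h]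
      ring
    · subst h
      simp only [if_neg (lt_irrefl i), hdiag i]
      ring
    · simp only [if_pos h, if_neg (asymm h)]
      ring
  simp only [key, Finset.sum_add_distrib, Finset.sum_sub_distrib]
  rw [sum_swap_strict f hsym]
  ring


lemma DS_inv (k : ℕ) :
    (DS k)⁻¹ = Matrix.diagonal (fun p : SymIdx k => if p.1.1 = p.1.2 then (1:ℝ) else (Real.sqrt 2)⁻¹) := by
  apply Matrix.inv_eq_right_inv
  rw [DS, Matrix.diagonal_mul_diagonal]
  convert Matrix.diagonal_one with p
  split
  · simp
  · exact mul_inv_cancel₀ (by positivity)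

lemma DSK_inv (k : ℕ) :
    (DSK k)⁻¹ = Matrix.diagonal (fun _ : SkewIdx k => (Real.sqrt 2)⁻¹) := by
  apply Matrix.inv_eq_right_inv
  rw [DSK, Matrix.diagonal_mul_diagonal]
  convert Matrix.diagonal_one with p
  exact mul_inv_cancel₀ (by positivity)

/-- `N₁ *ᵥ v` is the vectorization of the symmetrized, pattern-masked, rescaled matrix. -/
lemma N1_mulVec {k : ℕ} (E : Matrix (Fin k) (Fin k) ℂ) (hθ : ∀ i j, thetaR E i j = thetaR E j i)
    (v : SymIdx k → ℝ) (S : Matrix (Fin k) (Fin k) ℝ)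
    (hS : ∀ (i j : Fin k) (h : j ≤ i),
      S i j = (if i = j then 1 else (Real.sqrt 2)⁻¹) * thetaR E i j * v ⟨(i,j), h⟩)
    (hSsym : ∀ i j, S i j = S j i) :
    (JS k * Phi E * (DS k)⁻¹) *ᵥ v = vecM S := by
  have hent : ∀ (c r : Fin k) (p : SymIdx k), (JS k * Phi E * (DS k)⁻¹) (c, r) p
      = (JS k) (c, r) p * thetaR E p.1.1 p.1.2 * (if p.1.1 = p.1.2 then 1 else (Real.sqrt 2)⁻¹) := by
    intro c r p
    rw [DS_inv, Phi, Matrix.mul_diagonal, Matrix.mul_diagonal, vecS]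
  funext cr
  obtain ⟨c, r⟩ := cr
  show ∑ p : SymIdx k, (JS k * Phi E * (DS k)⁻¹) (c, r) p * v p = S r c
  simp only [hent]
  rcases le_or_gt c r with h | h
  · rw [Finset.sum_eq_single (⟨(r, c), h⟩ : SymIdx k)]
    · have hjs : (JS k) (c, r) (⟨(r, c), h⟩ : SymIdx k) = 1 := by
        by_cases hrc : r = c <;> simp [JS, hrc]
      rw [hjs, hS r c h]
      ring
    · rintro ⟨⟨i, j⟩, hle⟩ - hne
      have h1 : ¬(r = i ∧ c = j) := by
        rintro ⟨rfl, rfl⟩; exact hne rfl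
      have h2 : ¬(i ≠ j ∧ r = j ∧ c = i) := by
        rintro ⟨hij, rfl, rfl⟩
        exact hij (le_antisymm h hle)
      have hjs : (JS k) (c, r) (⟨(i, j), hle⟩ : SymIdx k) = 0 := by
        simp only [JS, Matrix.of_apply, if_neg h1, if_neg h2, add_zero]
      rw [hjs]
      ring
    · intro hmem; exact absurd (Finset.mem_univ _) hmem
  · rw [Finset.sum_eq_single (⟨(c, r), h.le⟩ : SymIdx k)]
    · have hjs : (JS k) (c, r) (⟨(c, r), h.le⟩ : SymIdx k) = 1 := by
        have h1 : ¬(r = c ∧ c = r) := by rintro ⟨rfl, -⟩; exact absurd h (lt_irrefl _)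
        simp [JS, h1, h.ne']
      rw [hjs, hSsym r c, hS c r h.le, hθ c r]
      ring
    · rintro ⟨⟨i, j⟩, hle⟩ - hne
      have h1 : ¬(r = i ∧ c = j) := by
        rintro ⟨rfl, rfl⟩
        exact absurd (h.trans_le hle) (lt_irrefl _)
      have h2 : ¬(i ≠ j ∧ r = j ∧ c = i) := by
        rintro ⟨-, rfl, rfl⟩; exact hne rfl
      have hjs : (JS k) (c, r) (⟨(i, j), hle⟩ : SymIdx k) = 0 := by
        simp only [JS, Matrix.of_apply, if_neg h1, if_neg h2, add_zero]
      rw [hjs]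
      ring
    · intro hmem; exact absurd (Finset.mem_univ _) hmem

/-- `N₂ *ᵥ v` is the vectorization of the skew-symmetrized, pattern-masked, rescaled matrix. -/
lemma N2_mulVec {k : ℕ} (E : Matrix (Fin k) (Fin k) ℂ) (hθ : ∀ i j, thetaR E i j = thetaR E j i)
    (v : SkewIdx k → ℝ) (K : Matrix (Fin k) (Fin k) ℝ)
    (hK : ∀ (i j : Fin k) (h : j < i),
      K i j = (Real.sqrt 2)⁻¹ * thetaR E i j * v ⟨(i,j), h⟩)
    (hKskew : ∀ i j, K i j = - K j i) :
    (JSK k * Psi E * (DSK k)⁻¹) *ᵥ v = vecM K := by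
  have hent : ∀ (c r : Fin k) (p : SkewIdx k), (JSK k * Psi E * (DSK k)⁻¹) (c, r) p
      = (JSK k) (c, r) p * thetaR E p.1.1 p.1.2 * (Real.sqrt 2)⁻¹ := by
    intro c r p
    rw [DSK_inv, Psi, Matrix.mul_diagonal, Matrix.mul_diagonal, vecSK]
  have hdiag : ∀ i, K i i = 0 := by
    intro i; have := hKskew i i; linarith
  funext cr
  obtain ⟨c, r⟩ := cr
  show ∑ p : SkewIdx k, (JSK k * Psi E * (DSK k)⁻¹) (c, r) p * v p = K r c
  simp only [hent]
  rcases lt_trichotomy c r with h | h | h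
  · rw [Finset.sum_eq_single (⟨(r, c), h⟩ : SkewIdx k)]
    · have hjs : (JSK k) (c, r) (⟨(r, c), h⟩ : SkewIdx k) = 1 := by
        have h2 : ¬(r = c ∧ c = r) := by rintro ⟨rfl, -⟩; exact absurd h (lt_irrefl _)
        simp [JSK, h2]
      rw [hjs, hK r c h]
      ring
    · rintro ⟨⟨i, j⟩, hlt⟩ - hne
      have h1 : ¬(r = i ∧ c = j) := by rintro ⟨rfl, rfl⟩; exact hne rfl
      have h2 : ¬(r = j ∧ c = i) := by
        rintro ⟨rfl, rfl⟩; exact absurd (h.trans hlt) (lt_irrefl _)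
      have hjs : (JSK k) (c, r) (⟨(i, j), hlt⟩ : SkewIdx k) = 0 := by
        simp only [JSK, Matrix.of_apply, if_neg h1, if_neg h2, sub_zero]
      rw [hjs]
      ring
    · intro hmem; exact absurd (Finset.mem_univ _) hmem
  · subst h
    rw [Finset.sum_eq_zero, hdiag]
    rintro ⟨⟨i, j⟩, hlt⟩ -
    have h1 : ¬(c = i ∧ c = j) := by
      rintro ⟨rfl, rfl⟩; exact absurd hlt (lt_irrefl _)
    have h2 : ¬(c = j ∧ c = i) := by
      rintro ⟨rfl, rfl⟩; exact absurd hlt (lt_irrefl _)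
    have hjs : (JSK k) (c, c) (⟨(i, j), hlt⟩ : SkewIdx k) = 0 := by
      simp only [JSK, Matrix.of_apply, if_neg h1, if_neg h2, sub_zero]
    rw [hjs]
    ring
  · rw [Finset.sum_eq_single (⟨(c, r), h⟩ : SkewIdx k)]
    · have hjs : (JSK k) (c, r) (⟨(c, r), h⟩ : SkewIdx k) = -1 := by
        have h1 : ¬(r = c ∧ c = r) := by rintro ⟨rfl, -⟩; exact absurd h (lt_irrefl _)
        simp [JSK, h1]
      rw [hjs, hKskew r c, hK c r h, hθ c r]
      ring
    · rintro ⟨⟨i, j⟩, hlt⟩ - hne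
      have h1 : ¬(r = i ∧ c = j) := by
        rintro ⟨rfl, rfl⟩; exact absurd (h.trans hlt) (lt_irrefl _)
      have h2 : ¬(r = j ∧ c = i) := by rintro ⟨rfl, rfl⟩; exact hne rfl
      have hjs : (JSK k) (c, r) (⟨(i, j), hlt⟩ : SkewIdx k) = 0 := by
        simp only [JSK, Matrix.of_apply, if_neg h1, if_neg h2, sub_zero]
      rw [hjs]
      ring
    · intro hmem; exact absurd (Finset.mem_univ _) hmem

/-- `Σ_F` fixes pattern-compatible vectorizations. -/
lemma Sig_mulVec {a b : ℕ} (F : Matrix (Fin b) (Fin a) ℂ) (Y : Matrix (Fin b) (Fin a) ℝ)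
    (hpat : ∀ i j, F i j = 0 → Y i j = 0) :
    Sig F *ᵥ vecM Y = vecM Y := by
  funext p
  rw [Sig, Matrix.mulVec_diagonal]
  show vecM (thetaR F) p * Y p.2 p.1 = Y p.2 p.1
  unfold vecM thetaR
  by_cases h : F p.2 p.1 = 0
  · simp [h, hpat _ _ h]
  · simp [h]

lemma rowKronId_mulVec {a b : ℕ} (u : Fin a → ℝ) (Y : Matrix (Fin b) (Fin a) ℝ) :
    rowKronId (b := b) u *ᵥ vecM Y = Y *ᵥ u := by
  funext r
  show ∑ p : Fin a × Fin b, rowKronId u r p * vecM Y p = _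
  rw [Fintype.sum_prod_type]
  simp only [rowKronId, Matrix.of_apply, vecM, mul_ite, mul_one, mul_zero, ite_mul, zero_mul]
  simp [Matrix.mulVec, dotProduct, mul_comm]

lemma idKronRow_mulVec {a b : ℕ} (v : Fin b → ℝ) (Y : Matrix (Fin b) (Fin a) ℝ) :
    idKronRow (a := a) v *ᵥ vecM Y = Yᵀ *ᵥ v := by
  funext r
  show ∑ p : Fin a × Fin b, idKronRow v r p * vecM Y p = _
  rw [Fintype.sum_prod_type]
  simp only [idKronRow, Matrix.of_apply, vecM, ite_mul, one_mul, zero_mul]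
  simp [Matrix.mulVec, dotProduct, Matrix.transpose_apply, mul_comm]

lemma reV_mulVec {a b : ℕ} (A : Matrix (Fin a) (Fin b) ℂ) (v : Fin b → ℂ) :
    reV (A *ᵥ v) = reM A *ᵥ reV v - imM A *ᵥ imV v := by
  funext i
  simp only [reV, Matrix.mulVec, dotProduct, Pi.sub_apply, reM, imM, imV,
    Matrix.map_apply, Complex.re_sum, ← Finset.sum_sub_distrib]
  congr 1

lemma imV_mulVec {a b : ℕ} (A : Matrix (Fin a) (Fin b) ℂ) (v : Fin b → ℂ) :
    imV (A *ᵥ v) = reM A *ᵥ imV v + imM A *ᵥ reV v := by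
  funext i
  simp only [imV, Matrix.mulVec, dotProduct, Pi.add_apply, reM, imM, reV,
    Matrix.map_apply, Complex.im_sum, ← Finset.sum_add_distrib]
  congr 1

lemma reV_conjT_mulVec {a b : ℕ} (B : Matrix (Fin b) (Fin a) ℂ) (p : Fin b → ℂ) :
    reV (Bᴴ *ᵥ p) = (reM B)ᵀ *ᵥ reV p + (imM B)ᵀ *ᵥ imV p := by
  funext i
  simp only [reV, Matrix.mulVec, dotProduct, Pi.add_apply, reM, imM, imV,
    Matrix.conjTranspose_apply, Matrix.transpose_apply, Matrix.map_apply,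
    Complex.re_sum, ← Finset.sum_add_distrib]
  congr 1
  funext j
  simp [Complex.mul_re]

lemma imV_conjT_mulVec {a b : ℕ} (B : Matrix (Fin b) (Fin a) ℂ) (p : Fin b → ℂ) :
    imV (Bᴴ *ᵥ p) = (reM B)ᵀ *ᵥ imV p - (imM B)ᵀ *ᵥ reV p := by
  funext i
  simp only [imV, Matrix.mulVec, dotProduct, Pi.sub_apply, reM, imM, reV,
    Matrix.conjTranspose_apply, Matrix.transpose_apply, Matrix.map_apply,
    Complex.im_sum, ← Finset.sum_sub_distrib]
  refine Finset.sum_congr rfl fun j _ => ?_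
  simp [Complex.mul_im]
  ring

lemma cvec_eq_iff {a : ℕ} (u v : Fin a → ℂ) : u = v ↔ reV u = reV v ∧ imV u = imV v := by
  constructor
  · rintro rfl; exact ⟨rfl, rfl⟩
  · rintro ⟨h1, h2⟩
    funext i
    have e1 := congrFun h1 i
    have e2 := congrFun h2 i
    exact Complex.ext e1 e2

lemma reV_sub {a : ℕ} (u v : Fin a → ℂ) : reV (u - v) = reV u - reV v := by
  funext i; simp [reV]

lemma imV_sub {a : ℕ} (u v : Fin a → ℂ) : imV (u - v) = imV u - imV v := by
  funext i; simp [imV]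

lemma reV_add {a : ℕ} (u v : Fin a → ℂ) : reV (u + v) = reV u + reV v := by
  funext i; simp [reV]

lemma imV_add {a : ℕ} (u v : Fin a → ℂ) : imV (u + v) = imV u + imV v := by
  funext i; simp [imV]


/-! ### Construction of perturbations from real vectors -/

/-- Complex matrix from real and imaginary parts. -/
def matC {a b : ℕ} (R I : Matrix (Fin a) (Fin b) ℝ) : Matrix (Fin a) (Fin b) ℂ :=
  fun i j => ⟨R i j, I i j⟩

lemma reM_matC {a b : ℕ} (R I : Matrix (Fin a) (Fin b) ℝ) : reM (matC R I) = R := rfl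
lemma imM_matC {a b : ℕ} (R I : Matrix (Fin a) (Fin b) ℝ) : imM (matC R I) = I := rfl

/-- Symmetric pattern-masked rescaled matrix built from a `SymIdx`-indexed vector. -/
def symMat {k : ℕ} (E : Matrix (Fin k) (Fin k) ℂ) (c : ℝ) (v : SymIdx k → ℝ) :
    Matrix (Fin k) (Fin k) ℝ :=
  fun i j => c * ((if i = j then 1 else (Real.sqrt 2)⁻¹) * thetaR E i j *
    (if h : j ≤ i then v ⟨(i,j), h⟩ else v ⟨(j,i), le_of_not_ge h⟩))

/-- Skew-symmetric pattern-masked rescaled matrix built from a `SkewIdx`-indexed vector. -/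
def skewMat {k : ℕ} (E : Matrix (Fin k) (Fin k) ℂ) (c : ℝ) (v : SkewIdx k → ℝ) :
    Matrix (Fin k) (Fin k) ℝ :=
  fun i j => c * ((Real.sqrt 2)⁻¹ * thetaR E i j *
    (if h : j < i then v ⟨(i,j), h⟩ else if h' : i < j then -(v ⟨(j,i), h'⟩) else 0))

lemma thetaR_symm {k : ℕ} {E : Matrix (Fin k) (Fin k) ℂ} (hE : E.IsHermitian) :
    ∀ i j, thetaR E i j = thetaR E j i := by
  intro i j
  unfold thetaR
  have h := hE.apply i j
  simp only [Matrix.of_apply]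
  by_cases h0 : E j i = 0
  · rw [if_pos h0, if_pos (by rw [← h, h0, star_zero])]
  · rw [if_neg h0, if_neg (by rw [← h]; simpa using h0)]

lemma symMat_symm {k : ℕ} {E : Matrix (Fin k) (Fin k) ℂ} (hE : E.IsHermitian) (c : ℝ)
    (v : SymIdx k → ℝ) : ∀ i j, symMat E c v i j = symMat E c v j i := by
  intro i j
  unfold symMat
  rcases lt_trichotomy i j with h | h | h
  · rw [dif_neg (not_le.mpr h), dif_pos h.le, if_neg h.ne, if_neg h.ne', thetaR_symm hE i j]
  · subst h; rfl
  · rw [dif_pos h.le, dif_neg (not_le.mpr h), if_neg h.ne, if_neg h.ne', thetaR_symm hE i j]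

lemma skewMat_skew {k : ℕ} {E : Matrix (Fin k) (Fin k) ℂ} (hE : E.IsHermitian) (c : ℝ)
    (v : SkewIdx k → ℝ) : ∀ i j, skewMat E c v i j = - skewMat E c v j i := by
  intro i j
  unfold skewMat
  rcases lt_trichotomy i j with h | h | h
  · rw [dif_neg (asymm h), dif_pos h, dif_pos h, thetaR_symm hE i j]
    ring
  · subst h
    simp only [dif_neg (lt_irrefl i)]
    ring
  · rw [dif_pos h, dif_neg (asymm h), dif_pos h, thetaR_symm hE i j]
    ring

lemma skewMat_diag {k : ℕ} (E : Matrix (Fin k) (Fin k) ℂ) (c : ℝ) (v : SkewIdx k → ℝ) (i : Fin k) :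
    skewMat E c v i i = 0 := by
  have := skewMat_skew (E := E)
  unfold skewMat
  rw [dif_neg (lt_irrefl i), dif_neg (lt_irrefl i)]
  ring

lemma symMat_smul {k : ℕ} (E : Matrix (Fin k) (Fin k) ℂ) (c : ℝ) (v : SymIdx k → ℝ) :
    symMat E c v = c • symMat E 1 v := by
  funext i j
  simp only [symMat, Matrix.smul_apply, smul_eq_mul]
  ring

lemma skewMat_smul {k : ℕ} (E : Matrix (Fin k) (Fin k) ℂ) (c : ℝ) (v : SkewIdx k → ℝ) :
    skewMat E c v = c • skewMat E 1 v := by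
  funext i j
  simp only [skewMat, Matrix.smul_apply, smul_eq_mul]
  ring

lemma matC_isHermitian {k : ℕ} (R I : Matrix (Fin k) (Fin k) ℝ)
    (hR : ∀ i j, R i j = R j i) (hI : ∀ i j, I i j = - I j i) :
    (matC R I).IsHermitian := by
  apply Matrix.IsHermitian.ext
  intro i j
  show star (matC R I j i) = matC R I i j
  rw [Complex.ext_iff]
  constructor
  · show (matC R I j i).re = (matC R I i j).re
    exact hR j i
  · show -(matC R I j i).im = (matC R I i j).im
    simp only [matC]
    rw [hI i j]

/-- A matrix whose entries vanish where the pattern vanishes is fixed by `hadamard ⬝ theta`. -/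
lemma hadamard_theta_self {a b : ℕ} (F : Matrix (Fin a) (Fin b) ℂ) (A : Matrix (Fin a) (Fin b) ℂ)
    (hpat : ∀ i j, F i j = 0 → A i j = 0) :
    A.hadamard (theta F) = A := by
  funext i j
  rw [Matrix.hadamard_apply, theta, Matrix.of_apply]
  by_cases h : F i j = 0
  · rw [if_pos h, hpat i j h, mul_zero]
  · rw [if_neg h, mul_one]

lemma thetaR_eq_zero_iff {a b : ℕ} (F : Matrix (Fin a) (Fin b) ℂ) (i : Fin a) (j : Fin b) :
    thetaR F i j = 0 ↔ F i j = 0 := by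
  unfold thetaR
  by_cases h : F i j = 0 <;> simp [h]

lemma hadamard_theta_isHermitian {k : ℕ} {E ΔE : Matrix (Fin k) (Fin k) ℂ}
    (hE : E.IsHermitian) (hΔ : ΔE.IsHermitian) : (ΔE.hadamard (theta E)).IsHermitian := by
  apply Matrix.IsHermitian.ext
  intro i j
  show star (ΔE j i * theta E j i) = ΔE i j * theta E i j
  rw [star_mul']
  rw [show star (ΔE j i) = ΔE i j from hΔ.apply i j]
  congr 1
  unfold theta
  have h := hE.apply i j
  simp only [Matrix.of_apply]
  by_cases h0 : E j i = 0
  · rw [if_pos h0, if_pos (by rw [← h, h0, star_zero]), star_zero]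
  · rw [if_neg h0, if_neg (by rw [← h]; simpa using h0), star_one]

/-! ### The big matrix and constructions -/

def bigX₁ (n m : ℕ) (E : Matrix (Fin n) (Fin n) ℂ) (F : Matrix (Fin m) (Fin n) ℂ)
    (uh : Fin n → ℂ) (ph : Fin m → ℂ) (α₁ α₂ : ℝ) :
    Matrix (Fin n ⊕ Fin n) ((SymIdx n ⊕ SkewIdx n) ⊕ ((Fin n × Fin m) ⊕ (Fin n × Fin m))) ℝ :=
  fromCols
    (fromRows
      (fromCols (α₁⁻¹ • (rowKronId (b := n) (reV uh) * (JS n * Phi E * (DS n)⁻¹)))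
        ((-(α₁⁻¹)) • (rowKronId (b := n) (imV uh) * (JSK n * Psi E * (DSK n)⁻¹))))
      (fromCols (α₁⁻¹ • (rowKronId (b := n) (imV uh) * (JS n * Phi E * (DS n)⁻¹)))
        (α₁⁻¹ • (rowKronId (b := n) (reV uh) * (JSK n * Psi E * (DSK n)⁻¹)))))
    (fromRows
      (fromCols (α₂⁻¹ • (idKronRow (a := n) (reV ph) * Sig F))
        (α₂⁻¹ • (idKronRow (a := n) (imV ph) * Sig F)))
      (fromCols (α₂⁻¹ • (idKronRow (a := n) (imV ph) * Sig F))
        ((-(α₂⁻¹)) • (idKronRow (a := n) (reV ph) * Sig F))))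

def bigZ (n m : ℕ) (F : Matrix (Fin m) (Fin n) ℂ) (uh : Fin n → ℂ) (α₂ : ℝ) :
    Matrix (Fin m ⊕ Fin m) ((SymIdx n ⊕ SkewIdx n) ⊕ ((Fin n × Fin m) ⊕ (Fin n × Fin m))) ℝ :=
  fromCols 0
    (fromRows
      (fromCols (α₂⁻¹ • (rowKronId (b := m) (reV uh) * Sig F))
        ((-(α₂⁻¹)) • (rowKronId (b := m) (imV uh) * Sig F)))
      (fromCols (α₂⁻¹ • (rowKronId (b := m) (imV uh) * Sig F))
        (α₂⁻¹ • (rowKronId (b := m) (reV uh) * Sig F))))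

def bigI₁ (n m : ℕ) (β₁ : ℝ) :
    Matrix (Fin n ⊕ Fin n) ((Fin n ⊕ Fin n) ⊕ (Fin m ⊕ Fin m)) ℝ :=
  fromCols ((-(β₁⁻¹)) • (1 : Matrix (Fin n ⊕ Fin n) (Fin n ⊕ Fin n) ℝ)) 0

def bigI₂ (n m : ℕ) (β₂ : ℝ) :
    Matrix (Fin m ⊕ Fin m) ((Fin n ⊕ Fin n) ⊕ (Fin m ⊕ Fin m)) ℝ :=
  fromCols 0 ((-(β₂⁻¹)) • (1 : Matrix (Fin m ⊕ Fin m) (Fin m ⊕ Fin m)  ℝ))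

def bigM (n m : ℕ) (E : Matrix (Fin n) (Fin n) ℂ) (F : Matrix (Fin m) (Fin n) ℂ)
    (uh : Fin n → ℂ) (ph : Fin m → ℂ) (α₁ α₂ β₁ β₂ : ℝ) :
    Matrix ((Fin n ⊕ Fin n) ⊕ (Fin m ⊕ Fin m))
      (((SymIdx n ⊕ SkewIdx n) ⊕ ((Fin n × Fin m) ⊕ (Fin n × Fin m)))
        ⊕ ((Fin n ⊕ Fin n) ⊕ (Fin m ⊕ Fin m))) ℝ :=
  fromBlocks (bigX₁ n m E F uh ph α₁ α₂) (bigI₁ n m β₁) (bigZ n m F uh α₂) (bigI₂ n m β₂)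

/-- Real part of `B`-type construction. -/
def BRe (n m : ℕ) (F : Matrix (Fin m) (Fin n) ℂ) (v : Fin n × Fin m → ℝ) :
    Matrix (Fin m) (Fin n) ℝ :=
  Matrix.of fun i j => thetaR F i j * v (j, i)

def Amat (n : ℕ) (E : Matrix (Fin n) (Fin n) ℂ) (α₁ : ℝ)
    (vS : SymIdx n → ℝ) (vK : SkewIdx n → ℝ) : Matrix (Fin n) (Fin n) ℂ :=
  matC (α₁⁻¹ • symMat E 1 vS) (α₁⁻¹ • skewMat E 1 vK)

def Bmat (n m : ℕ) (F : Matrix (Fin m) (Fin n) ℂ) (α₂ : ℝ)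
    (vF1 vF2 : Fin n × Fin m → ℝ) : Matrix (Fin m) (Fin n) ℂ :=
  matC (α₂⁻¹ • BRe n m F vF1) (α₂⁻¹ • BRe n m F vF2)

def dqv (n : ℕ) (β₁ : ℝ) (vq1 vq2 : Fin n → ℝ) : Fin n → ℂ :=
  fun i => ⟨β₁⁻¹ * vq1 i, β₁⁻¹ * vq2 i⟩

lemma sum_elim_eq_iff {a b : Type*} {f g : a → ℝ} {h k : b → ℝ} :
    Sum.elim f h = Sum.elim g k ↔ f = g ∧ h = k := by
  constructor
  · intro he
    exact ⟨funext fun i => congrFun he (Sum.inl i), funext fun i => congrFun he (Sum.inr i)⟩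
  · rintro ⟨rfl, rfl⟩; rfl

lemma smul_sum_elim {a b : Type*} (c : ℝ) (f : a → ℝ) (g : b → ℝ) :
    c • Sum.elim f g = Sum.elim (c • f) (c • g) := by
  funext i; rcases i with i | i <;> rfl

lemma sum_elim_add_sum_elim {a b : Type*} (f g : a → ℝ) (h k : b → ℝ) :
    Sum.elim f h + Sum.elim g k = Sum.elim (f + g) (h + k) := by
  funext i; rcases i with i | i <;> rfl

lemma bigM_mulVec (n m : ℕ) (E : Matrix (Fin n) (Fin n) ℂ) (hE : E.IsHermitian)
    (F : Matrix (Fin m) (Fin n) ℂ) (uh : Fin n → ℂ) (ph : Fin m → ℂ) (α₁ α₂ β₁ β₂ : ℝ)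
    (vS : SymIdx n → ℝ) (vK : SkewIdx n → ℝ) (vF1 vF2 : Fin n × Fin m → ℝ)
    (vq1 vq2 : Fin n → ℝ) (vr1 vr2 : Fin m → ℝ) :
    bigM n m E F uh ph α₁ α₂ β₁ β₂ *ᵥ
      Sum.elim (Sum.elim (Sum.elim vS vK) (Sum.elim vF1 vF2))
        (Sum.elim (Sum.elim vq1 vq2) (Sum.elim vr1 vr2))
    = Sum.elim
        (Sum.elim
          (reV (Amat n E α₁ vS vK *ᵥ uh + (Bmat n m F α₂ vF1 vF2)ᴴ *ᵥ ph
            - dqv n β₁ vq1 vq2))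
          (imV (Amat n E α₁ vS vK *ᵥ uh + (Bmat n m F α₂ vF1 vF2)ᴴ *ᵥ ph
            - dqv n β₁ vq1 vq2)))
        (Sum.elim
          (reV (Bmat n m F α₂ vF1 vF2 *ᵥ uh - dqv m β₂ vr1 vr2))
          (imV (Bmat n m F α₂ vF1 vF2 *ᵥ uh - dqv m β₂ vr1 vr2))) := by
  -- auxiliary computations
  have hθ := thetaR_symm hE
  have hN1 : ∀ (u : Fin n → ℝ), (rowKronId (b := n) u * (JS n * Phi E * (DS n)⁻¹)) *ᵥ vS
      = symMat E 1 vS *ᵥ u := by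
    intro u
    rw [← Matrix.mulVec_mulVec,
      N1_mulVec E hθ vS (symMat E 1 vS)
        (fun i j h => by unfold symMat; rw [dif_pos h]; ring)
        (symMat_symm hE 1 vS),
      rowKronId_mulVec]
  have hN2 : ∀ (u : Fin n → ℝ), (rowKronId (b := n) u * (JSK n * Psi E * (DSK n)⁻¹)) *ᵥ vK
      = skewMat E 1 vK *ᵥ u := by
    intro u
    rw [← Matrix.mulVec_mulVec,
      N2_mulVec E hθ vK (skewMat E 1 vK)
        (fun i j h => by unfold skewMat; rw [dif_pos h]; ring)
        (skewMat_skew hE 1 vK),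
      rowKronId_mulVec]
  have hSig : ∀ (v : Fin n × Fin m → ℝ), Sig F *ᵥ v = vecM (BRe n m F v) := by
    intro v
    funext p
    rw [Sig, Matrix.mulVec_diagonal]
    rfl
  have hSigCol : ∀ (v : Fin n × Fin m → ℝ) (w : Fin m → ℝ),
      (idKronRow (a := n) w * Sig F) *ᵥ v = (BRe n m F v)ᵀ *ᵥ w := by
    intro v w
    rw [← Matrix.mulVec_mulVec, hSig, idKronRow_mulVec]
  have hSigRow : ∀ (v : Fin n × Fin m → ℝ) (w : Fin n → ℝ),
      (rowKronId (b := m) w * Sig F) *ᵥ v = BRe n m F v *ᵥ w := by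
    intro v w
    rw [← Matrix.mulVec_mulVec, hSig, rowKronId_mulVec]
  rw [bigM, Matrix.fromBlocks_mulVec]
  simp only [Sum.elim_comp_inl, Sum.elim_comp_inr]
  rw [bigX₁, bigZ, bigI₁, bigI₂]
  rw [Matrix.fromCols_mulVec_sumElim, Matrix.fromCols_mulVec_sumElim,
    Matrix.fromCols_mulVec_sumElim, Matrix.fromCols_mulVec_sumElim,
    Matrix.fromRows_mulVec, Matrix.fromRows_mulVec, Matrix.fromRows_mulVec]
  rw [Matrix.fromCols_mulVec_sumElim, Matrix.fromCols_mulVec_sumElim,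
    Matrix.fromCols_mulVec_sumElim, Matrix.fromCols_mulVec_sumElim,
    Matrix.fromCols_mulVec_sumElim, Matrix.fromCols_mulVec_sumElim]
  rw [Matrix.zero_mulVec, Matrix.zero_mulVec, Matrix.zero_mulVec]
  simp only [Matrix.smul_mulVec, Matrix.one_mulVec]
  rw [hN1, hN1, hN2, hN2, hSigCol, hSigCol, hSigCol, hSigCol, hSigRow, hSigRow, hSigRow, hSigRow]
  rw [smul_sum_elim, smul_sum_elim]
  simp only [add_zero, zero_add]
  rw [sum_elim_add_sum_elim, sum_elim_add_sum_elim, sum_elim_add_sum_elim]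
  rw [sum_elim_eq_iff, sum_elim_eq_iff, sum_elim_eq_iff]
  refine ⟨⟨?_, ?_⟩, ?_, ?_⟩
  · rw [reV_sub, reV_add, reV_mulVec, reV_conjT_mulVec]
    have hA : reM (Amat n E α₁ vS vK) = α₁⁻¹ • symMat E 1 vS := rfl
    have hAi : imM (Amat n E α₁ vS vK) = α₁⁻¹ • skewMat E 1 vK := rfl
    have hB : reM (Bmat n m F α₂ vF1 vF2) = α₂⁻¹ • BRe n m F vF1 := rfl
    have hBi : imM (Bmat n m F α₂ vF1 vF2) = α₂⁻¹ • BRe n m F vF2 := rfl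
    have hq : reV (dqv n β₁ vq1 vq2) = β₁⁻¹ • vq1 := rfl
    rw [hA, hAi, hB, hBi, hq]
    try simp only [Matrix.smul_mulVec, Matrix.transpose_smul]
    try (funext i; simp only [Pi.add_apply, Pi.sub_apply, Pi.smul_apply, Pi.neg_apply,
      smul_eq_mul]; ring)
  · rw [imV_sub, imV_add, imV_mulVec, imV_conjT_mulVec]
    have hA : reM (Amat n E α₁ vS vK) = α₁⁻¹ • symMat E 1 vS := rfl
    have hAi : imM (Amat n E α₁ vS vK) = α₁⁻¹ • skewMat E 1 vK := rfl
    have hB : reM (Bmat n m F α₂ vF1 vF2) = α₂⁻¹ • BRe n m F vF1 := rfl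
    have hBi : imM (Bmat n m F α₂ vF1 vF2) = α₂⁻¹ • BRe n m F vF2 := rfl
    have hq : imV (dqv n β₁ vq1 vq2) = β₁⁻¹ • vq2 := rfl
    rw [hA, hAi, hB, hBi, hq]
    try simp only [Matrix.smul_mulVec, Matrix.transpose_smul]
    try (funext i; simp only [Pi.add_apply, Pi.sub_apply, Pi.smul_apply, Pi.neg_apply,
      smul_eq_mul]; ring)
  · rw [reV_sub, reV_mulVec]
    have hB : reM (Bmat n m F α₂ vF1 vF2) = α₂⁻¹ • BRe n m F vF1 := rfl
    have hBi : imM (Bmat n m F α₂ vF1 vF2) = α₂⁻¹ • BRe n m F vF2 := rfl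
    have hr : reV (dqv m β₂ vr1 vr2) = β₂⁻¹ • vr1 := rfl
    rw [hB, hBi, hr]
    try simp only [Matrix.smul_mulVec]
    try (funext i; simp only [Pi.add_apply, Pi.sub_apply, Pi.smul_apply, Pi.neg_apply,
      smul_eq_mul]; ring)
  · rw [imV_sub, imV_mulVec]
    have hB : reM (Bmat n m F α₂ vF1 vF2) = α₂⁻¹ • BRe n m F vF1 := rfl
    have hBi : imM (Bmat n m F α₂ vF1 vF2) = α₂⁻¹ • BRe n m F vF2 := rfl
    have hr : imV (dqv m β₂ vr1 vr2) = β₂⁻¹ • vr2 := rfl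
    rw [hB, hBi, hr]
    try simp only [Matrix.smul_mulVec]
    try (funext i; simp only [Pi.add_apply, Pi.sub_apply, Pi.smul_apply, Pi.neg_apply,
      smul_eq_mul]; ring)

def Qvec (n m : ℕ) (E : Matrix (Fin n) (Fin n) ℂ) (F : Matrix (Fin m) (Fin n) ℂ)
    (q : Fin n → ℂ) (uh : Fin n → ℂ) (ph : Fin m → ℂ) : Fin n → ℂ :=
  q - E *ᵥ uh - Fᴴ *ᵥ ph

def Rvec (n m : ℕ) (F : Matrix (Fin m) (Fin n) ℂ) (r : Fin m → ℂ) (uh : Fin n → ℂ) :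
    Fin m → ℂ :=
  r - F *ᵥ uh

def bigW (n m : ℕ) (E : Matrix (Fin n) (Fin n) ℂ) (F : Matrix (Fin m) (Fin n) ℂ)
    (q : Fin n → ℂ) (r : Fin m → ℂ) (uh : Fin n → ℂ) (ph : Fin m → ℂ) :
    (Fin n ⊕ Fin n) ⊕ (Fin m ⊕ Fin m) → ℝ :=
  Sum.elim (Sum.elim (reV (Qvec n m E F q uh ph)) (imV (Qvec n m E F q uh ph)))
    (Sum.elim (reV (Rvec n m F r uh)) (imV (Rvec n m F r uh)))

lemma constraints_iff (n m : ℕ) (E : Matrix (Fin n) (Fin n) ℂ) (hE : E.IsHermitian)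
    (F : Matrix (Fin m) (Fin n) ℂ) (q : Fin n → ℂ) (r : Fin m → ℂ)
    (uh : Fin n → ℂ) (ph : Fin m → ℂ) (α₁ α₂ β₁ β₂ : ℝ)
    (vS : SymIdx n → ℝ) (vK : SkewIdx n → ℝ) (vF1 vF2 : Fin n × Fin m → ℝ)
    (vq1 vq2 : Fin n → ℝ) (vr1 vr2 : Fin m → ℝ) :
    (bigM n m E F uh ph α₁ α₂ β₁ β₂ *ᵥ
        Sum.elim (Sum.elim (Sum.elim vS vK) (Sum.elim vF1 vF2))
          (Sum.elim (Sum.elim vq1 vq2) (Sum.elim vr1 vr2))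
      = bigW n m E F q r uh ph)
    ↔ ((E + Amat n E α₁ vS vK) *ᵥ uh + (F + Bmat n m F α₂ vF1 vF2)ᴴ *ᵥ ph
          = q + dqv n β₁ vq1 vq2
        ∧ (F + Bmat n m F α₂ vF1 vF2) *ᵥ uh = r + dqv m β₂ vr1 vr2) := by
  rw [bigM_mulVec n m E hE F uh ph α₁ α₂ β₁ β₂, bigW, sum_elim_eq_iff, sum_elim_eq_iff,
    sum_elim_eq_iff]
  have h1 : ((E + Amat n E α₁ vS vK) *ᵥ uh + (F + Bmat n m F α₂ vF1 vF2)ᴴ *ᵥ ph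
        = q + dqv n β₁ vq1 vq2)
      ↔ (Amat n E α₁ vS vK *ᵥ uh + (Bmat n m F α₂ vF1 vF2)ᴴ *ᵥ ph - dqv n β₁ vq1 vq2
        = Qvec n m E F q uh ph) := by
    rw [Matrix.add_mulVec, Matrix.conjTranspose_add, Matrix.add_mulVec, Qvec]
    constructor <;> intro h <;> linear_combination h
  have h2 : ((F + Bmat n m F α₂ vF1 vF2) *ᵥ uh = r + dqv m β₂ vr1 vr2)
      ↔ (Bmat n m F α₂ vF1 vF2 *ᵥ uh - dqv m β₂ vr1 vr2 = Rvec n m F r uh) := by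
    rw [Matrix.add_mulVec, Rvec]
    constructor <;> intro h <;> linear_combination h
  rw [h1, h2, cvec_eq_iff, cvec_eq_iff]
  try tauto

lemma cnorm_sq (z : ℂ) : ‖z‖ ^ 2 = z.re ^ 2 + z.im ^ 2 := by
  rw [Complex.sq_norm, Complex.normSq_apply]
  ring

lemma thetaR_cases {a b : ℕ} (F : Matrix (Fin a) (Fin b) ℂ) (i : Fin a) (j : Fin b) :
    thetaR F i j = 0 ∨ thetaR F i j = 1 := by
  unfold thetaR
  by_cases h : F i j = 0 <;> simp [h]

lemma sqrt_two_inv_sq : ((Real.sqrt 2)⁻¹) ^ 2 = 2⁻¹ := by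
  rw [inv_pow, Real.sq_sqrt (by norm_num : (0:ℝ) ≤ 2)]

lemma value_sq (n m : ℕ) (E : Matrix (Fin n) (Fin n) ℂ) (hE : E.IsHermitian)
    (F : Matrix (Fin m) (Fin n) ℂ) (α₁ α₂ β₁ β₂ : ℝ)
    (hα₁ : α₁ ≠ 0) (hα₂ : α₂ ≠ 0) (hβ₁ : β₁ ≠ 0) (hβ₂ : β₂ ≠ 0)
    (vS : SymIdx n → ℝ) (vK : SkewIdx n → ℝ) (vF1 vF2 : Fin n × Fin m → ℝ)
    (vq1 vq2 : Fin n → ℝ) (vr1 vr2 : Fin m → ℝ) :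
    α₁ ^ 2 * frob (Amat n E α₁ vS vK) ^ 2 + α₂ ^ 2 * frob (Bmat n m F α₂ vF1 vF2) ^ 2
      + β₁ ^ 2 * eunorm (dqv n β₁ vq1 vq2) ^ 2 + β₂ ^ 2 * eunorm (dqv m β₂ vr1 vr2) ^ 2
    = ((∑ p : SymIdx n, thetaR E p.1.1 p.1.2 * vS p ^ 2)
        + (∑ p : SkewIdx n, thetaR E p.1.1 p.1.2 * vK p ^ 2))
      + ((∑ p : Fin n × Fin m, thetaR F p.2 p.1 * vF1 p ^ 2)
        + (∑ p : Fin n × Fin m, thetaR F p.2 p.1 * vF2 p ^ 2))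
      + ((∑ i, vq1 i ^ 2) + (∑ i, vq2 i ^ 2)) + ((∑ i, vr1 i ^ 2) + (∑ i, vr2 i ^ 2)) := by
  have hfrob_sq : ∀ {a b : ℕ} (X : Matrix (Fin a) (Fin b) ℂ),
      frob X ^ 2 = ∑ i, ∑ j, ‖X i j‖ ^ 2 := by
    intro a b X
    rw [frob, Real.sq_sqrt (by positivity)]
  have hA : α₁ ^ 2 * frob (Amat n E α₁ vS vK) ^ 2
      = (∑ p : SymIdx n, thetaR E p.1.1 p.1.2 * vS p ^ 2)
        + (∑ p : SkewIdx n, thetaR E p.1.1 p.1.2 * vK p ^ 2) := by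
    rw [hfrob_sq]
    have expand : ∀ i j, ‖Amat n E α₁ vS vK i j‖ ^ 2
        = (α₁⁻¹ • symMat E 1 vS) i j ^ 2 + (α₁⁻¹ • skewMat E 1 vK) i j ^ 2 := by
      intro i j
      rw [cnorm_sq]
      rfl
    simp only [expand, Finset.sum_add_distrib]
    rw [sum_split_sym (fun i j => (α₁⁻¹ • symMat E 1 vS) i j ^ 2)
        (fun i j => by
          show (α₁⁻¹ • symMat E 1 vS) i j ^ 2 = (α₁⁻¹ • symMat E 1 vS) j i ^ 2
          rw [Matrix.smul_apply, Matrix.smul_apply, symMat_symm hE 1 vS i j]),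
      sum_split_skew (fun i j => (α₁⁻¹ • skewMat E 1 vK) i j ^ 2)
        (fun i j => by
          show (α₁⁻¹ • skewMat E 1 vK) i j ^ 2 = (α₁⁻¹ • skewMat E 1 vK) j i ^ 2
          rw [Matrix.smul_apply, Matrix.smul_apply, skewMat_skew hE 1 vK i j, smul_eq_mul,
            smul_eq_mul, mul_neg, neg_sq])
        (fun i => by
          show (α₁⁻¹ • skewMat E 1 vK) i i ^ 2 = 0
          rw [Matrix.smul_apply, skewMat_diag]
          simp),
      mul_add, Finset.mul_sum, Finset.mul_sum]
    congr 1
    · refine Finset.sum_congr rfl fun p _ => ?_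
      obtain ⟨⟨i, j⟩, hle⟩ := p
      simp only [Matrix.smul_apply, smul_eq_mul, symMat]
      rw [dif_pos hle]
      rcases thetaR_cases E i j with h | h <;> rw [h]
      · ring
      · by_cases hij : i = j
        · rw [if_pos hij, if_pos hij]
          field_simp
        · rw [if_neg hij, if_neg hij]
          have h2 : ((Real.sqrt 2)⁻¹) ^ 2 = 2⁻¹ := sqrt_two_inv_sq
          field_simp
          rw [Real.sq_sqrt (by norm_num : (0:ℝ) ≤ 2)]
    · refine Finset.sum_congr rfl fun p _ => ?_
      obtain ⟨⟨i, j⟩, hlt⟩ := p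
      simp only [Matrix.smul_apply, smul_eq_mul, skewMat]
      rw [dif_pos hlt]
      rcases thetaR_cases E i j with h | h <;> rw [h]
      · ring
      · have h2 : ((Real.sqrt 2)⁻¹) ^ 2 = 2⁻¹ := sqrt_two_inv_sq
        field_simp
        rw [Real.sq_sqrt (by norm_num : (0:ℝ) ≤ 2)]
  have hB : α₂ ^ 2 * frob (Bmat n m F α₂ vF1 vF2) ^ 2
      = (∑ p : Fin n × Fin m, thetaR F p.2 p.1 * vF1 p ^ 2)
        + (∑ p : Fin n × Fin m, thetaR F p.2 p.1 * vF2 p ^ 2) := by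
    rw [hfrob_sq]
    have expand : ∀ i j, ‖Bmat n m F α₂ vF1 vF2 i j‖ ^ 2
        = (α₂⁻¹ • BRe n m F vF1) i j ^ 2 + (α₂⁻¹ • BRe n m F vF2) i j ^ 2 := by
      intro i j
      rw [cnorm_sq]
      rfl
    simp only [expand, Finset.sum_add_distrib]
    rw [Fintype.sum_prod_type (f := fun p : Fin n × Fin m => thetaR F p.2 p.1 * vF1 p ^ 2),
      Fintype.sum_prod_type (f := fun p : Fin n × Fin m => thetaR F p.2 p.1 * vF2 p ^ 2),
      Finset.sum_comm (f := fun (a : Fin n) (b : Fin m) => thetaR F b a * vF1 (a, b) ^ 2),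
      Finset.sum_comm (f := fun (a : Fin n) (b : Fin m) => thetaR F b a * vF2 (a, b) ^ 2)]
    rw [mul_add, Finset.mul_sum, Finset.mul_sum]
    congr 1
    · refine Finset.sum_congr rfl fun i _ => ?_
      rw [Finset.mul_sum]
      refine Finset.sum_congr rfl fun j _ => ?_
      simp only [Matrix.smul_apply, smul_eq_mul, BRe, Matrix.of_apply]
      rcases thetaR_cases F i j with h | h <;> rw [h]
      · ring
      · field_simp
    · refine Finset.sum_congr rfl fun i _ => ?_
      rw [Finset.mul_sum]
      refine Finset.sum_congr rfl fun j _ => ?_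
      simp only [Matrix.smul_apply, smul_eq_mul, BRe, Matrix.of_apply]
      rcases thetaR_cases F i j with h | h <;> rw [h]
      · ring
      · field_simp
  have hq : ∀ (k : ℕ) (β : ℝ), β ≠ 0 → ∀ (w1 w2 : Fin k → ℝ),
      β ^ 2 * eunorm (dqv k β w1 w2) ^ 2 = (∑ i, w1 i ^ 2) + (∑ i, w2 i ^ 2) := by
    intro k β hβ w1 w2
    rw [eunorm, Real.sq_sqrt (by positivity)]
    have expand : ∀ i, ‖dqv k β w1 w2 i‖ ^ 2 = (β⁻¹ * w1 i) ^ 2 + (β⁻¹ * w2 i) ^ 2 := by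
      intro i
      rw [cnorm_sq]
      rfl
    simp only [expand, Finset.sum_add_distrib]
    rw [mul_add, Finset.mul_sum, Finset.mul_sum]
    congr 1 <;> refine Finset.sum_congr rfl fun i _ => ?_ <;> field_simp
  rw [hA, hB, hq n β₁ hβ₁ vq1 vq2, hq m β₂ hβ₂ vr1 vr2]

lemma Amat_eq (n : ℕ) (E : Matrix (Fin n) (Fin n) ℂ) (α₁ : ℝ) (hα₁ : α₁ ≠ 0)
    (G : Matrix (Fin n) (Fin n) ℂ) (hG : G.IsHermitian)
    (hpat : ∀ i j, E i j = 0 → G i j = 0) :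
    Amat n E α₁ (fun p => α₁ * (if p.1.1 = p.1.2 then 1 else Real.sqrt 2) * (G p.1.1 p.1.2).re)
      (fun p => α₁ * Real.sqrt 2 * (G p.1.1 p.1.2).im) = G := by
  have hs2 : Real.sqrt 2 ≠ 0 := by positivity
  have hre : ∀ i j : Fin n, (G j i).re = (G i j).re := by
    intro i j
    rw [← hG.apply i j]
    exact (Complex.conj_re _).symm
  have him : ∀ i j : Fin n, (G j i).im = -(G i j).im := by
    intro i j
    have h0 := congrArg Complex.im (hG.apply i j)
    simp at h0
    linarith
  have hz : ∀ i j : Fin n, thetaR E i j = 0 → G i j = 0 := by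
    intro i j h
    exact hpat i j ((thetaR_eq_zero_iff E i j).mp h)
  funext i j
  apply Complex.ext
  · show α₁⁻¹ * symMat E 1 (fun p => α₁ * (if p.1.1 = p.1.2 then 1 else Real.sqrt 2)
      * (G p.1.1 p.1.2).re) i j = (G i j).re
    unfold symMat
    rcases le_or_gt j i with h | h
    · rw [dif_pos h]
      rcases thetaR_cases E i j with hθ | hθ
      · rw [hθ, hz i j hθ]
        simp
      · rw [hθ]
        by_cases hij : i = j
        · simp only [if_pos hij]
          field_simp
        · simp only [if_neg hij]
          field_simp
          try ring
    · rw [dif_neg (not_le.mpr h)]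
      rcases thetaR_cases E i j with hθ | hθ
      · rw [hθ, hz i j hθ]
        simp
      · rw [hθ]
        have hij : ¬ i = j := by rintro rfl; exact absurd h (lt_irrefl i)
        have hji : ¬ j = i := fun e => hij e.symm
        simp only [if_neg hij, if_neg hji]
        rw [hre i j]
        field_simp
        try ring
  · show α₁⁻¹ * skewMat E 1 (fun p => α₁ * Real.sqrt 2 * (G p.1.1 p.1.2).im) i j = (G i j).im
    unfold skewMat
    rcases lt_trichotomy j i with h | h | h
    · rw [dif_pos h]
      rcases thetaR_cases E i j with hθ | hθ
      · rw [hθ, hz i j hθ]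
        simp
      · rw [hθ]
        field_simp
        try ring
    · subst h
      rw [dif_neg (lt_irrefl j), dif_neg (lt_irrefl j)]
      have h0 : (G j j).im = 0 := by
        have := him j j
        linarith
      rw [h0]
      ring
    · rw [dif_neg (asymm h), dif_pos h]
      rcases thetaR_cases E i j with hθ | hθ
      · rw [hθ, hz i j hθ]
        simp
      · simp only [hθ, him i j]
        field_simp
        try ring

lemma Bmat_eq (n m : ℕ) (F : Matrix (Fin m) (Fin n) ℂ) (α₂ : ℝ) (hα₂ : α₂ ≠ 0)
    (H : Matrix (Fin m) (Fin n) ℂ) (hpat : ∀ i j, F i j = 0 → H i j = 0) :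
    Bmat n m F α₂ (fun p => α₂ * (H p.2 p.1).re) (fun p => α₂ * (H p.2 p.1).im) = H := by
  have hθ : ∀ (f : ℂ → ℝ) (i j), f 0 = 0 → thetaR F i j * f (H i j) = f (H i j) := by
    intro f i j hf0
    rcases thetaR_cases F i j with h | h
    · rw [h, (thetaR_eq_zero_iff F i j).mp h |> hpat i j, hf0]
      simp
    · rw [h, one_mul]
  funext i j
  apply Complex.ext
  · show α₂⁻¹ * BRe n m F (fun p => α₂ * (H p.2 p.1).re) i j = (H i j).re
    unfold BRe
    simp only [Matrix.of_apply]
    rw [show thetaR F i j * (α₂ * (H i j).re) = α₂ * (thetaR F i j * (H i j).re) by ring,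
      hθ Complex.re i j rfl]
    field_simp
  · show α₂⁻¹ * BRe n m F (fun p => α₂ * (H p.2 p.1).im) i j = (H i j).im
    unfold BRe
    simp only [Matrix.of_apply]
    rw [show thetaR F i j * (α₂ * (H i j).im) = α₂ * (thetaR F i j * (H i j).im) by ring,
      hθ Complex.im i j rfl]
    field_simp

lemma dqv_eq (k : ℕ) (β : ℝ) (hβ : β ≠ 0) (w : Fin k → ℂ) :
    dqv k β (fun i => β * (w i).re) (fun i => β * (w i).im) = w := by
  funext i
  apply Complex.ext
  · show β⁻¹ * (β * (w i).re) = (w i).re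
    field_simp
  · show β⁻¹ * (β * (w i).im) = (w i).im
    field_simp

lemma Amat_pattern (n : ℕ) (E : Matrix (Fin n) (Fin n) ℂ) (α₁ : ℝ)
    (vS : SymIdx n → ℝ) (vK : SkewIdx n → ℝ) :
    ∀ i j, E i j = 0 → Amat n E α₁ vS vK i j = 0 := by
  intro i j h
  have hθ : thetaR E i j = 0 := (thetaR_eq_zero_iff E i j).mpr h
  apply Complex.ext
  · show α₁⁻¹ * symMat E 1 vS i j = (0:ℂ).re
    unfold symMat
    rw [hθ]
    simp
  · show α₁⁻¹ * skewMat E 1 vK i j = (0:ℂ).im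
    unfold skewMat
    rw [hθ]
    simp

lemma Bmat_pattern (n m : ℕ) (F : Matrix (Fin m) (Fin n) ℂ) (α₂ : ℝ)
    (vF1 vF2 : Fin n × Fin m → ℝ) :
    ∀ i j, F i j = 0 → Bmat n m F α₂ vF1 vF2 i j = 0 := by
  intro i j h
  have hθ : thetaR F i j = 0 := (thetaR_eq_zero_iff F i j).mpr h
  apply Complex.ext
  · show α₂⁻¹ * BRe n m F vF1 i j = (0:ℂ).re
    unfold BRe
    simp [hθ]
  · show α₂⁻¹ * BRe n m F vF2 i j = (0:ℂ).im
    unfold BRe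
    simp [hθ]

lemma Amat_isHermitian (n : ℕ) {E : Matrix (Fin n) (Fin n) ℂ} (hE : E.IsHermitian) (α₁ : ℝ)
    (vS : SymIdx n → ℝ) (vK : SkewIdx n → ℝ) : (Amat n E α₁ vS vK).IsHermitian := by
  apply matC_isHermitian
  · intro i j
    show α₁⁻¹ * symMat E 1 vS i j = α₁⁻¹ * symMat E 1 vS j i
    rw [symMat_symm hE 1 vS i j]
  · intro i j
    show α₁⁻¹ * skewMat E 1 vK i j = -(α₁⁻¹ * skewMat E 1 vK j i)
    rw [skewMat_skew hE 1 vK i j]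
    ring

lemma N1_col_zero {k : ℕ} (E : Matrix (Fin k) (Fin k) ℂ) (p : SymIdx k)
    (hp : thetaR E p.1.1 p.1.2 = 0) (t : Fin k × Fin k) :
    (JS k * Phi E * (DS k)⁻¹) t p = 0 := by
  rw [DS_inv, Matrix.mul_diagonal, Phi, Matrix.mul_diagonal, vecS, hp]
  ring

lemma N2_col_zero {k : ℕ} (E : Matrix (Fin k) (Fin k) ℂ) (p : SkewIdx k)
    (hp : thetaR E p.1.1 p.1.2 = 0) (t : Fin k × Fin k) :
    (JSK k * Psi E * (DSK k)⁻¹) t p = 0 := by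
  rw [DSK_inv, Matrix.mul_diagonal, Psi, Matrix.mul_diagonal, vecSK, hp]
  ring

lemma Sig_col_zero {a b : ℕ} (F : Matrix (Fin b) (Fin a) ℂ) (p : Fin a × Fin b)
    (hp : thetaR F p.2 p.1 = 0) {c : Type*} [Fintype c] (W : Matrix c (Fin a × Fin b) ℝ)
    (t : c) : (W * Sig F) t p = 0 := by
  rw [Sig, Matrix.mul_diagonal]
  show _ * vecM (thetaR F) p = 0
  rw [show vecM (thetaR F) p = thetaR F p.2 p.1 from rfl, hp]
  ring

lemma bigM_col_zero_S (n m : ℕ) (E : Matrix (Fin n) (Fin n) ℂ)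
    (F : Matrix (Fin m) (Fin n) ℂ) (uh : Fin n → ℂ) (ph : Fin m → ℂ) (α₁ α₂ β₁ β₂ : ℝ)
    (p : SymIdx n) (hp : thetaR E p.1.1 p.1.2 = 0) :
    ∀ ro, bigM n m E F uh ph α₁ α₂ β₁ β₂ ro (Sum.inl (Sum.inl (Sum.inl p))) = 0 := by
  intro ro
  have key : ∀ (u : Fin n → ℝ) (t : Fin n),
      (rowKronId (b := n) u * (JS n * Phi E * (DS n)⁻¹)) t p = 0 := by
    intro u t
    rw [Matrix.mul_apply]
    exact Finset.sum_eq_zero fun c _ => by rw [N1_col_zero E p hp c, mul_zero]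
  rcases ro with (i | i) | (i | i)
  · show (bigX₁ n m E F uh ph α₁ α₂) (Sum.inl i) (Sum.inl (Sum.inl p)) = 0
    rw [bigX₁, Matrix.fromCols_apply_inl, Matrix.fromRows_apply_inl,
      Matrix.fromCols_apply_inl, Matrix.smul_apply, key, smul_zero]
  · show (bigX₁ n m E F uh ph α₁ α₂) (Sum.inr i) (Sum.inl (Sum.inl p)) = 0
    rw [bigX₁, Matrix.fromCols_apply_inl, Matrix.fromRows_apply_inr,
      Matrix.fromCols_apply_inl, Matrix.smul_apply, key, smul_zero]
  · show (bigZ n m F uh α₂) (Sum.inl i) (Sum.inl (Sum.inl p)) = 0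
    rw [bigZ, Matrix.fromCols_apply_inl]
    rfl
  · show (bigZ n m F uh α₂) (Sum.inr i) (Sum.inl (Sum.inl p)) = 0
    rw [bigZ, Matrix.fromCols_apply_inl]
    rfl

lemma bigM_col_zero_K (n m : ℕ) (E : Matrix (Fin n) (Fin n) ℂ)
    (F : Matrix (Fin m) (Fin n) ℂ) (uh : Fin n → ℂ) (ph : Fin m → ℂ) (α₁ α₂ β₁ β₂ : ℝ)
    (p : SkewIdx n) (hp : thetaR E p.1.1 p.1.2 = 0) :
    ∀ ro, bigM n m E F uh ph α₁ α₂ β₁ β₂ ro (Sum.inl (Sum.inl (Sum.inr p))) = 0 := by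
  intro ro
  have key : ∀ (u : Fin n → ℝ) (t : Fin n),
      (rowKronId (b := n) u * (JSK n * Psi E * (DSK n)⁻¹)) t p = 0 := by
    intro u t
    rw [Matrix.mul_apply]
    exact Finset.sum_eq_zero fun c _ => by rw [N2_col_zero E p hp c, mul_zero]
  rcases ro with (i | i) | (i | i)
  · show (bigX₁ n m E F uh ph α₁ α₂) (Sum.inl i) (Sum.inl (Sum.inr p)) = 0
    rw [bigX₁, Matrix.fromCols_apply_inl, Matrix.fromRows_apply_inl,
      Matrix.fromCols_apply_inr, Matrix.smul_apply, key, smul_zero]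
  · show (bigX₁ n m E F uh ph α₁ α₂) (Sum.inr i) (Sum.inl (Sum.inr p)) = 0
    rw [bigX₁, Matrix.fromCols_apply_inl, Matrix.fromRows_apply_inr,
      Matrix.fromCols_apply_inr, Matrix.smul_apply, key, smul_zero]
  · show (bigZ n m F uh α₂) (Sum.inl i) (Sum.inl (Sum.inr p)) = 0
    rw [bigZ, Matrix.fromCols_apply_inl]
    rfl
  · show (bigZ n m F uh α₂) (Sum.inr i) (Sum.inl (Sum.inr p)) = 0
    rw [bigZ, Matrix.fromCols_apply_inl]
    rfl

lemma bigM_col_zero_F1 (n m : ℕ) (E : Matrix (Fin n) (Fin n) ℂ)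
    (F : Matrix (Fin m) (Fin n) ℂ) (uh : Fin n → ℂ) (ph : Fin m → ℂ) (α₁ α₂ β₁ β₂ : ℝ)
    (p : Fin n × Fin m) (hp : thetaR F p.2 p.1 = 0) :
    ∀ ro, bigM n m E F uh ph α₁ α₂ β₁ β₂ ro (Sum.inl (Sum.inr (Sum.inl p))) = 0 := by
  intro ro
  rcases ro with (i | i) | (i | i)
  · show (bigX₁ n m E F uh ph α₁ α₂) (Sum.inl i) (Sum.inr (Sum.inl p)) = 0
    rw [bigX₁, Matrix.fromCols_apply_inr, Matrix.fromRows_apply_inl,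
      Matrix.fromCols_apply_inl, Matrix.smul_apply, Sig_col_zero F p hp, smul_zero]
  · show (bigX₁ n m E F uh ph α₁ α₂) (Sum.inr i) (Sum.inr (Sum.inl p)) = 0
    rw [bigX₁, Matrix.fromCols_apply_inr, Matrix.fromRows_apply_inr,
      Matrix.fromCols_apply_inl, Matrix.smul_apply, Sig_col_zero F p hp, smul_zero]
  · show (bigZ n m F uh α₂) (Sum.inl i) (Sum.inr (Sum.inl p)) = 0
    rw [bigZ, Matrix.fromCols_apply_inr, Matrix.fromRows_apply_inl,
      Matrix.fromCols_apply_inl, Matrix.smul_apply, Sig_col_zero F p hp, smul_zero]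
  · show (bigZ n m F uh α₂) (Sum.inr i) (Sum.inr (Sum.inl p)) = 0
    rw [bigZ, Matrix.fromCols_apply_inr, Matrix.fromRows_apply_inr,
      Matrix.fromCols_apply_inl, Matrix.smul_apply, Sig_col_zero F p hp, smul_zero]

lemma bigM_col_zero_F2 (n m : ℕ) (E : Matrix (Fin n) (Fin n) ℂ)
    (F : Matrix (Fin m) (Fin n) ℂ) (uh : Fin n → ℂ) (ph : Fin m → ℂ) (α₁ α₂ β₁ β₂ : ℝ)
    (p : Fin n × Fin m) (hp : thetaR F p.2 p.1 = 0) :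
    ∀ ro, bigM n m E F uh ph α₁ α₂ β₁ β₂ ro (Sum.inl (Sum.inr (Sum.inr p))) = 0 := by
  intro ro
  rcases ro with (i | i) | (i | i)
  · show (bigX₁ n m E F uh ph α₁ α₂) (Sum.inl i) (Sum.inr (Sum.inr p)) = 0
    rw [bigX₁, Matrix.fromCols_apply_inr, Matrix.fromRows_apply_inl,
      Matrix.fromCols_apply_inr, Matrix.smul_apply, Sig_col_zero F p hp, smul_zero]
  · show (bigX₁ n m E F uh ph α₁ α₂) (Sum.inr i) (Sum.inr (Sum.inr p)) = 0
    rw [bigX₁, Matrix.fromCols_apply_inr, Matrix.fromRows_apply_inr,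
      Matrix.fromCols_apply_inr, Matrix.smul_apply, Sig_col_zero F p hp, smul_zero]
  · show (bigZ n m F uh α₂) (Sum.inl i) (Sum.inr (Sum.inr p)) = 0
    rw [bigZ, Matrix.fromCols_apply_inr, Matrix.fromRows_apply_inl,
      Matrix.fromCols_apply_inr, Matrix.smul_apply, Sig_col_zero F p hp, smul_zero]
  · show (bigZ n m F uh α₂) (Sum.inr i) (Sum.inr (Sum.inr p)) = 0
    rw [bigZ, Matrix.fromCols_apply_inr, Matrix.fromRows_apply_inr,
      Matrix.fromCols_apply_inr, Matrix.smul_apply, Sig_col_zero F p hp, smul_zero]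

/-- the transpose of bigM applied to a vector, at the identity-block coordinates -/
lemma bigMT_apply_inr (n m : ℕ) (E : Matrix (Fin n) (Fin n) ℂ)
    (F : Matrix (Fin m) (Fin n) ℂ) (uh : Fin n → ℂ) (ph : Fin m → ℂ) (α₁ α₂ β₁ β₂ : ℝ)
    (v : (Fin n ⊕ Fin n) ⊕ (Fin m ⊕ Fin m) → ℝ) :
    ∀ c, ((bigM n m E F uh ph α₁ α₂ β₁ β₂)ᵀ *ᵥ v) (Sum.inr c)
      = Sum.elim (fun c' => -β₁⁻¹ * v (Sum.inl c')) (fun c' => -β₂⁻¹ * v (Sum.inr c')) c := by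
  intro c
  show ∑ ro, (bigM n m E F uh ph α₁ α₂ β₁ β₂)ᵀ (Sum.inr c) ro * v ro = _
  simp only [Matrix.transpose_apply]
  rw [Fintype.sum_sum_type]
  have h1 : ∀ s, bigM n m E F uh ph α₁ α₂ β₁ β₂ (Sum.inl s) (Sum.inr c)
      = bigI₁ n m β₁ s c := fun s => rfl
  have h2 : ∀ s, bigM n m E F uh ph α₁ α₂ β₁ β₂ (Sum.inr s) (Sum.inr c)
      = bigI₂ n m β₂ s c := fun s => rfl
  simp only [h1, h2]
  rcases c with c' | c'
  · have e1 : ∀ s, bigI₁ n m β₁ s (Sum.inl c') = -β₁⁻¹ * (if s = c' then 1 else 0) := by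
      intro s
      rw [bigI₁, Matrix.fromCols_apply_inl, Matrix.smul_apply, Matrix.one_apply]
      simp [smul_eq_mul]
    have e2 : ∀ s, bigI₂ n m β₂ s (Sum.inl c') = 0 := by
      intro s
      rw [bigI₂, Matrix.fromCols_apply_inl]
      rfl
    simp only [e1, e2, zero_mul, Finset.sum_const_zero, add_zero, mul_ite, mul_one, mul_zero,
      ite_mul, zero_mul]
    rw [Finset.sum_ite_eq' Finset.univ c' (fun s => -β₁⁻¹ * v (Sum.inl s))]
    simp
  · have e1 : ∀ s, bigI₁ n m β₁ s (Sum.inr c') = 0 := by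
      intro s
      rw [bigI₁, Matrix.fromCols_apply_inr]
      rfl
    have e2 : ∀ s, bigI₂ n m β₂ s (Sum.inr c') = -β₂⁻¹ * (if s = c' then 1 else 0) := by
      intro s
      rw [bigI₂, Matrix.fromCols_apply_inr, Matrix.smul_apply, Matrix.one_apply]
      simp [smul_eq_mul]
    simp only [e1, e2, zero_mul, Finset.sum_const_zero, zero_add, mul_ite, mul_one, mul_zero,
      ite_mul, zero_mul]
    rw [Finset.sum_ite_eq' Finset.univ c' (fun s => -β₂⁻¹ * v (Sum.inr s))]
    simp

lemma isUnit_bigM (n m : ℕ) (E : Matrix (Fin n) (Fin n) ℂ)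
    (F : Matrix (Fin m) (Fin n) ℂ) (uh : Fin n → ℂ) (ph : Fin m → ℂ) (α₁ α₂ β₁ β₂ : ℝ)
    (hβ₁ : β₁ ≠ 0) (hβ₂ : β₂ ≠ 0) :
    IsUnit (bigM n m E F uh ph α₁ α₂ β₁ β₂ * (bigM n m E F uh ph α₁ α₂ β₁ β₂)ᵀ) := by
  set M := bigM n m E F uh ph α₁ α₂ β₁ β₂ with hM
  have hMT : Mᵀ = Mᴴ := (Matrix.conjTranspose_eq_transpose_of_trivial M).symm
  apply Matrix.PosDef.isUnit
  rw [Matrix.posDef_iff_dotProduct_mulVec]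
  constructor
  · rw [hMT]
    exact Matrix.isHermitian_mul_conjTranspose_self M
  · intro v hv
    have hstar : star v = v := by
      funext i
      simp
    rw [hstar]
    have hrw : v ⬝ᵥ ((M * Mᵀ) *ᵥ v) = (Mᵀ *ᵥ v) ⬝ᵥ (Mᵀ *ᵥ v) := by
      rw [← Matrix.mulVec_mulVec, dotProduct_mulVec, ← Matrix.mulVec_transpose]
    rw [hrw]
    have hne : Mᵀ *ᵥ v ≠ 0 := by
      intro h0
      apply hv
      funext ro
      rcases ro with c | c
      · have := congrFun h0 (Sum.inr (Sum.inl c))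
        rw [bigMT_apply_inr] at this
        simp only [Sum.elim_inl, Pi.zero_apply] at this
        have hβ : -β₁⁻¹ ≠ 0 := by simp [hβ₁]
        simpa [hβ] using mul_eq_zero.mp this |>.resolve_left hβ
      · have := congrFun h0 (Sum.inr (Sum.inr c))
        rw [bigMT_apply_inr] at this
        simp only [Sum.elim_inr, Pi.zero_apply] at this
        have hβ : -β₂⁻¹ ≠ 0 := by simp [hβ₂]
        simpa [hβ] using mul_eq_zero.mp this |>.resolve_left hβ
    obtain ⟨i, hi⟩ := Function.ne_iff.mp hne
    have : 0 < ∑ j, (Mᵀ *ᵥ v) j * (Mᵀ *ᵥ v) j := by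
      apply Finset.sum_pos' (fun j _ => mul_self_nonneg _)
      exact ⟨i, Finset.mem_univ i, mul_self_pos.mpr hi⟩
    simpa [dotProduct] using this

lemma habs {c : Type} [Fintype c] (θ : c → ℝ) (v : c → ℝ)
    (hθ : ∀ p, θ p = 0 ∨ θ p = 1) (hv : ∀ p, θ p = 0 → v p = 0) :
    ∑ p, θ p * v p ^ 2 = ∑ p, v p ^ 2 := by
  refine Finset.sum_congr rfl fun p _ => ?_
  rcases hθ p with h | h
  · rw [h, hv p h]
    ring
  · rw [h, one_mul]

lemma sqrt_value_eq_eunorm (n m : ℕ) (E : Matrix (Fin n) (Fin n) ℂ) (hE : E.IsHermitian)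
    (F : Matrix (Fin m) (Fin n) ℂ) (α₁ α₂ β₁ β₂ : ℝ)
    (hα₁ : α₁ ≠ 0) (hα₂ : α₂ ≠ 0) (hβ₁ : β₁ ≠ 0) (hβ₂ : β₂ ≠ 0)
    (vS : SymIdx n → ℝ) (vK : SkewIdx n → ℝ) (vF1 vF2 : Fin n × Fin m → ℝ)
    (vq1 vq2 : Fin n → ℝ) (vr1 vr2 : Fin m → ℝ)
    (hpS : ∀ p, thetaR E p.1.1 p.1.2 = 0 → vS p = 0)
    (hpK : ∀ p, thetaR E p.1.1 p.1.2 = 0 → vK p = 0)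
    (hpF1 : ∀ p, thetaR F p.2 p.1 = 0 → vF1 p = 0)
    (hpF2 : ∀ p, thetaR F p.2 p.1 = 0 → vF2 p = 0) :
    Real.sqrt (α₁ ^ 2 * frob (Amat n E α₁ vS vK) ^ 2
        + α₂ ^ 2 * frob (Bmat n m F α₂ vF1 vF2) ^ 2
        + β₁ ^ 2 * eunorm (dqv n β₁ vq1 vq2) ^ 2 + β₂ ^ 2 * eunorm (dqv m β₂ vr1 vr2) ^ 2)
      = eunorm (Sum.elim (Sum.elim (Sum.elim vS vK) (Sum.elim vF1 vF2))
          (Sum.elim (Sum.elim vq1 vq2) (Sum.elim vr1 vr2))) := by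
  rw [value_sq n m E hE F α₁ α₂ β₁ β₂ hα₁ hα₂ hβ₁ hβ₂ vS vK vF1 vF2 vq1 vq2 vr1 vr2,
    eunorm_real]
  congr 1
  have e1 : ∑ p : SymIdx n, thetaR E p.1.1 p.1.2 * vS p ^ 2 = ∑ p, vS p ^ 2 :=
    habs (c := SymIdx n) (fun p => thetaR E p.1.1 p.1.2) vS (fun p => thetaR_cases E p.1.1 p.1.2) hpS
  have e2 : ∑ p : SkewIdx n, thetaR E p.1.1 p.1.2 * vK p ^ 2 = ∑ p, vK p ^ 2 :=
    habs (c := SkewIdx n) (fun p => thetaR E p.1.1 p.1.2) vK (fun p => thetaR_cases E p.1.1 p.1.2) hpK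
  have e3 : ∑ p : Fin n × Fin m, thetaR F p.2 p.1 * vF1 p ^ 2 = ∑ p, vF1 p ^ 2 :=
    habs (c := Fin n × Fin m) (fun p => thetaR F p.2 p.1) vF1 (fun p => thetaR_cases F p.2 p.1) hpF1
  have e4 : ∑ p : Fin n × Fin m, thetaR F p.2 p.1 * vF2 p ^ 2 = ∑ p, vF2 p ^ 2 :=
    habs (c := Fin n × Fin m) (fun p => thetaR F p.2 p.1) vF2 (fun p => thetaR_cases F p.2 p.1) hpF2
  rw [e1, e2, e3, e4]
  simp only [Fintype.sum_sum_type, Sum.elim_inl, Sum.elim_inr]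
  ring

theorem main_isLeast (n m : ℕ) (E : Matrix (Fin n) (Fin n) ℂ) (hE : E.IsHermitian)
    (F : Matrix (Fin m) (Fin n) ℂ)
    (q : Fin n → ℂ) (r : Fin m → ℂ) (uh : Fin n → ℂ) (ph : Fin m → ℂ)
    (α₁ α₂ β₁ β₂ : ℝ)
    (hα₁ : 0 < α₁) (hα₂ : 0 < α₂) (hβ₁ : 0 < β₁) (hβ₂ : 0 < β₂) :
    IsLeast
      {t : ℝ | ∃ (ΔE : Matrix (Fin n) (Fin n) ℂ) (ΔF : Matrix (Fin m) (Fin n) ℂ)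
          (Δq : Fin n → ℂ) (Δr : Fin m → ℂ),
          ΔE.IsHermitian ∧
          (E + ΔE.hadamard (theta E)) *ᵥ uh + (F + ΔF.hadamard (theta F))ᴴ *ᵥ ph = q + Δq ∧
          (F + ΔF.hadamard (theta F)) *ᵥ uh = r + Δr ∧
          t = Real.sqrt (α₁ ^ 2 * frob (ΔE.hadamard (theta E)) ^ 2 +
                α₂ ^ 2 * frob (ΔF.hadamard (theta F)) ^ 2 +
                β₁ ^ 2 * eunorm Δq ^ 2 + β₂ ^ 2 * eunorm Δr ^ 2)}
      (eunorm (((bigM n m E F uh ph α₁ α₂ β₁ β₂)ᵀ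
          * (bigM n m E F uh ph α₁ α₂ β₁ β₂ * (bigM n m E F uh ph α₁ α₂ β₁ β₂)ᵀ)⁻¹)
        *ᵥ bigW n m E F q r uh ph)) := by
  have hα₁' := hα₁.ne'
  have hα₂' := hα₂.ne'
  have hβ₁' := hβ₁.ne'
  have hβ₂' := hβ₂.ne'
  set M := bigM n m E F uh ph α₁ α₂ β₁ β₂ with hMdef
  set w := bigW n m E F q r uh ph with hwdef
  have hunit : IsUnit (M * Mᵀ) := isUnit_bigM n m E F uh ph α₁ α₂ β₁ β₂ hβ₁' hβ₂'
  obtain ⟨hsolve, hmin⟩ := minNorm M w hunit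
  set x₀ : _ → ℝ := (Mᵀ * (M * Mᵀ)⁻¹) *ᵥ w with hx₀def
  set vS : SymIdx n → ℝ := fun p => x₀ (Sum.inl (Sum.inl (Sum.inl p))) with hvS
  set vK : SkewIdx n → ℝ := fun p => x₀ (Sum.inl (Sum.inl (Sum.inr p))) with hvK
  set vF1 : Fin n × Fin m → ℝ := fun p => x₀ (Sum.inl (Sum.inr (Sum.inl p))) with hvF1
  set vF2 : Fin n × Fin m → ℝ := fun p => x₀ (Sum.inl (Sum.inr (Sum.inr p))) with hvF2
  set vq1 : Fin n → ℝ := fun i => x₀ (Sum.inr (Sum.inl (Sum.inl i))) with hvq1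
  set vq2 : Fin n → ℝ := fun i => x₀ (Sum.inr (Sum.inl (Sum.inr i))) with hvq2
  set vr1 : Fin m → ℝ := fun i => x₀ (Sum.inr (Sum.inr (Sum.inl i))) with hvr1
  set vr2 : Fin m → ℝ := fun i => x₀ (Sum.inr (Sum.inr (Sum.inr i))) with hvr2
  have hx₀ : x₀ = Sum.elim (Sum.elim (Sum.elim vS vK) (Sum.elim vF1 vF2))
      (Sum.elim (Sum.elim vq1 vq2) (Sum.elim vr1 vr2)) := by
    funext ix
    rcases ix with ((p | p) | (p | p)) | ((i | i) | (i | i)) <;> rfl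
  have hx₀T : x₀ = Mᵀ *ᵥ ((M * Mᵀ)⁻¹ *ᵥ w) := by
    rw [hx₀def, Matrix.mulVec_mulVec]
  have hx₀entry : ∀ c, x₀ c = ∑ ro, M ro c * ((M * Mᵀ)⁻¹ *ᵥ w) ro := by
    intro c
    rw [hx₀T]
    show ∑ ro, Mᵀ c ro * _ = _
    simp only [Matrix.transpose_apply]
  have hpS : ∀ p, thetaR E p.1.1 p.1.2 = 0 → vS p = 0 := by
    intro p hp
    rw [hvS]
    show x₀ (Sum.inl (Sum.inl (Sum.inl p))) = 0
    rw [hx₀entry]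
    exact Finset.sum_eq_zero fun ro _ => by
      rw [hMdef, bigM_col_zero_S n m E F uh ph α₁ α₂ β₁ β₂ p hp ro, zero_mul]
  have hpK : ∀ p, thetaR E p.1.1 p.1.2 = 0 → vK p = 0 := by
    intro p hp
    rw [hvK]
    show x₀ (Sum.inl (Sum.inl (Sum.inr p))) = 0
    rw [hx₀entry]
    exact Finset.sum_eq_zero fun ro _ => by
      rw [hMdef, bigM_col_zero_K n m E F uh ph α₁ α₂ β₁ β₂ p hp ro, zero_mul]
  have hpF1 : ∀ p, thetaR F p.2 p.1 = 0 → vF1 p = 0 := by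
    intro p hp
    rw [hvF1]
    show x₀ (Sum.inl (Sum.inr (Sum.inl p))) = 0
    rw [hx₀entry]
    exact Finset.sum_eq_zero fun ro _ => by
      rw [hMdef, bigM_col_zero_F1 n m E F uh ph α₁ α₂ β₁ β₂ p hp ro, zero_mul]
  have hpF2 : ∀ p, thetaR F p.2 p.1 = 0 → vF2 p = 0 := by
    intro p hp
    rw [hvF2]
    show x₀ (Sum.inl (Sum.inr (Sum.inr p))) = 0
    rw [hx₀entry]
    exact Finset.sum_eq_zero fun ro _ => by
      rw [hMdef, bigM_col_zero_F2 n m E F uh ph α₁ α₂ β₁ β₂ p hp ro, zero_mul]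
  constructor
  · -- membership
    have hsolve' : M *ᵥ (Sum.elim (Sum.elim (Sum.elim vS vK) (Sum.elim vF1 vF2))
        (Sum.elim (Sum.elim vq1 vq2) (Sum.elim vr1 vr2))) = w := by
      rw [← hx₀]
      exact hsolve
    obtain ⟨hc1, hc2⟩ := (constraints_iff n m E hE F q r uh ph α₁ α₂ β₁ β₂
      vS vK vF1 vF2 vq1 vq2 vr1 vr2).mp hsolve'
    have hhadA : (Amat n E α₁ vS vK).hadamard (theta E) = Amat n E α₁ vS vK :=
      hadamard_theta_self E _ (Amat_pattern n E α₁ vS vK)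
    have hhadB : (Bmat n m F α₂ vF1 vF2).hadamard (theta F) = Bmat n m F α₂ vF1 vF2 :=
      hadamard_theta_self F _ (Bmat_pattern n m F α₂ vF1 vF2)
    refine ⟨Amat n E α₁ vS vK, Bmat n m F α₂ vF1 vF2, dqv n β₁ vq1 vq2, dqv m β₂ vr1 vr2,
      Amat_isHermitian n hE α₁ vS vK, ?_, ?_, ?_⟩
    · rw [hhadA, hhadB]
      exact hc1
    · rw [hhadB]
      exact hc2
    · rw [hhadA, hhadB,
        sqrt_value_eq_eunorm n m E hE F α₁ α₂ β₁ β₂ hα₁' hα₂' hβ₁' hβ₂'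
          vS vK vF1 vF2 vq1 vq2 vr1 vr2 hpS hpK hpF1 hpF2, ← hx₀]
  · -- lower bound
    rintro t ⟨ΔE, ΔF, Δq, Δr, hherm, hc1, hc2, hteq⟩
    set G := ΔE.hadamard (theta E) with hG
    set H := ΔF.hadamard (theta F) with hH
    have hGH : G.IsHermitian := hadamard_theta_isHermitian hE hherm
    have hGpat : ∀ i j, E i j = 0 → G i j = 0 := by
      intro i j h
      rw [hG, Matrix.hadamard_apply, theta, Matrix.of_apply, if_pos h, mul_zero]
    have hHpat : ∀ i j, F i j = 0 → H i j = 0 := by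
      intro i j h
      rw [hH, Matrix.hadamard_apply, theta, Matrix.of_apply, if_pos h, mul_zero]
    set wS : SymIdx n → ℝ :=
      fun p => α₁ * (if p.1.1 = p.1.2 then 1 else Real.sqrt 2) * (G p.1.1 p.1.2).re with hwS
    set wK : SkewIdx n → ℝ := fun p => α₁ * Real.sqrt 2 * (G p.1.1 p.1.2).im with hwK
    set wF1 : Fin n × Fin m → ℝ := fun p => α₂ * (H p.2 p.1).re with hwF1
    set wF2 : Fin n × Fin m → ℝ := fun p => α₂ * (H p.2 p.1).im with hwF2
    set wq1 : Fin n → ℝ := fun i => β₁ * (Δq i).re with hwq1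
    set wq2 : Fin n → ℝ := fun i => β₁ * (Δq i).im with hwq2
    set wr1 : Fin m → ℝ := fun i => β₂ * (Δr i).re with hwr1
    set wr2 : Fin m → ℝ := fun i => β₂ * (Δr i).im with hwr2
    have hA : Amat n E α₁ wS wK = G := Amat_eq n E α₁ hα₁' G hGH hGpat
    have hB : Bmat n m F α₂ wF1 wF2 = H := Bmat_eq n m F α₂ hα₂' H hHpat
    have hq : dqv n β₁ wq1 wq2 = Δq := dqv_eq n β₁ hβ₁' Δq
    have hr : dqv m β₂ wr1 wr2 = Δr := dqv_eq m β₂ hβ₂' Δr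
    have hMx : M *ᵥ (Sum.elim (Sum.elim (Sum.elim wS wK) (Sum.elim wF1 wF2))
        (Sum.elim (Sum.elim wq1 wq2) (Sum.elim wr1 wr2))) = w := by
      apply (constraints_iff n m E hE F q r uh ph α₁ α₂ β₁ β₂
        wS wK wF1 wF2 wq1 wq2 wr1 wr2).mpr
      refine ⟨?_, ?_⟩
      · rw [hA, hB, hq]
        exact hc1
      · rw [hB, hr]
        exact hc2
    have hwpS : ∀ p, thetaR E p.1.1 p.1.2 = 0 → wS p = 0 := by
      intro p hp
      rw [hwS]
      show α₁ * _ * (G p.1.1 p.1.2).re = 0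
      rw [hGpat p.1.1 p.1.2 ((thetaR_eq_zero_iff E _ _).mp hp)]
      simp
    have hwpK : ∀ p, thetaR E p.1.1 p.1.2 = 0 → wK p = 0 := by
      intro p hp
      rw [hwK]
      show α₁ * _ * (G p.1.1 p.1.2).im = 0
      rw [hGpat p.1.1 p.1.2 ((thetaR_eq_zero_iff E _ _).mp hp)]
      simp
    have hwpF1 : ∀ p, thetaR F p.2 p.1 = 0 → wF1 p = 0 := by
      intro p hp
      rw [hwF1]
      show α₂ * (H p.2 p.1).re = 0
      rw [hHpat p.2 p.1 ((thetaR_eq_zero_iff F _ _).mp hp)]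
      simp
    have hwpF2 : ∀ p, thetaR F p.2 p.1 = 0 → wF2 p = 0 := by
      intro p hp
      rw [hwF2]
      show α₂ * (H p.2 p.1).im = 0
      rw [hHpat p.2 p.1 ((thetaR_eq_zero_iff F _ _).mp hp)]
      simp
    have ht : t = eunorm (Sum.elim (Sum.elim (Sum.elim wS wK) (Sum.elim wF1 wF2))
        (Sum.elim (Sum.elim wq1 wq2) (Sum.elim wr1 wr2))) := by
      rw [hteq, ← hA, ← hB, ← hq, ← hr,
        sqrt_value_eq_eunorm n m E hE F α₁ α₂ β₁ β₂ hα₁' hα₂' hβ₁' hβ₂'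
          wS wK wF1 wF2 wq1 wq2 wr1 wr2 hwpS hwpK hwpF1 hwpF2]
    rw [ht]
    exact hmin _ hMx

/-- Corollary 3.4: sparsity-preserving structured backward error for the GSPP
with `E` Hermitian and `G = 0`. -/
theorem structured_BE_case_i_G_zero
    (n m : ℕ) (E : Matrix (Fin n) (Fin n) ℂ) (hE : E.IsHermitian)
    (F : Matrix (Fin m) (Fin n) ℂ)
    (q : Fin n → ℂ) (r : Fin m → ℂ) (uh : Fin n → ℂ) (ph : Fin m → ℂ)
    (α₁ α₂ β₁ β₂ : ℝ)
    (hα₁ : 0 < α₁) (hα₂ : 0 < α₂) (hβ₁ : 0 < β₁) (hβ₂ : 0 < β₂) :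
    let Q : Fin n → ℂ := q - E *ᵥ uh - Fᴴ *ᵥ ph
    let Rh : Fin m → ℂ := r - F *ᵥ uh
    let N₁ := JS n * Phi E * (DS n)⁻¹
    let N₂ := JSK n * Psi E * (DSK n)⁻¹
    let X₁ : Matrix (Fin n ⊕ Fin n)
        ((SymIdx n ⊕ SkewIdx n) ⊕ ((Fin n × Fin m) ⊕ (Fin n × Fin m))) ℝ :=
      fromCols
        (fromRows
          (fromCols (α₁⁻¹ • (rowKronId (reV uh) * N₁))
            ((-(α₁⁻¹)) • (rowKronId (imV uh) * N₂)))
          (fromCols (α₁⁻¹ • (rowKronId (imV uh) * N₁))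
            (α₁⁻¹ • (rowKronId (reV uh) * N₂))))
        (fromRows
          (fromCols (α₂⁻¹ • (idKronRow (reV ph) * Sig F))
            (α₂⁻¹ • (idKronRow (imV ph) * Sig F)))
          (fromCols (α₂⁻¹ • (idKronRow (imV ph) * Sig F))
            ((-(α₂⁻¹)) • (idKronRow (reV ph) * Sig F))))
    let Z : Matrix (Fin m ⊕ Fin m)
        ((SymIdx n ⊕ SkewIdx n) ⊕ ((Fin n × Fin m) ⊕ (Fin n × Fin m))) ℝ :=
      fromCols 0
        (fromRows
          (fromCols (α₂⁻¹ • (rowKronId (reV uh) * Sig F))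
            ((-(α₂⁻¹)) • (rowKronId (imV uh) * Sig F)))
          (fromCols (α₂⁻¹ • (rowKronId (imV uh) * Sig F))
            (α₂⁻¹ • (rowKronId (reV uh) * Sig F))))
    let I₁ : Matrix (Fin n ⊕ Fin n) ((Fin n ⊕ Fin n) ⊕ (Fin m ⊕ Fin m)) ℝ :=
      fromCols ((-(β₁⁻¹)) • (1 : Matrix (Fin n ⊕ Fin n) (Fin n ⊕ Fin n) ℝ)) 0
    let I₂ : Matrix (Fin m ⊕ Fin m) ((Fin n ⊕ Fin n) ⊕ (Fin m ⊕ Fin m)) ℝ :=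
      fromCols 0 ((-(β₂⁻¹)) • (1 : Matrix (Fin m ⊕ Fin m) (Fin m ⊕ Fin m) ℝ))
    let M := fromBlocks X₁ I₁ Z I₂
    let w : (Fin n ⊕ Fin n) ⊕ (Fin m ⊕ Fin m) → ℝ :=
      Sum.elim (Sum.elim (reV Q) (imV Q)) (Sum.elim (reV Rh) (imV Rh))
    IsUnit (M * Mᵀ) ∧
      IsLeast
        {t : ℝ | ∃ (ΔE : Matrix (Fin n) (Fin n) ℂ) (ΔF : Matrix (Fin m) (Fin n) ℂ)
            (Δq : Fin n → ℂ) (Δr : Fin m → ℂ),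
            ΔE.IsHermitian ∧
            (E + ΔE.hadamard (theta E)) *ᵥ uh + (F + ΔF.hadamard (theta F))ᴴ *ᵥ ph = q + Δq ∧
            (F + ΔF.hadamard (theta F)) *ᵥ uh = r + Δr ∧
            t = Real.sqrt (α₁ ^ 2 * frob (ΔE.hadamard (theta E)) ^ 2 +
                  α₂ ^ 2 * frob (ΔF.hadamard (theta F)) ^ 2 +
                  β₁ ^ 2 * eunorm Δq ^ 2 + β₂ ^ 2 * eunorm Δr ^ 2)}
        (eunorm ((Mᵀ * (M * Mᵀ)⁻¹) *ᵥ w)) := by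
  intro Q Rh N₁ N₂ X₁ Z I₁ I₂ M w
  refine ⟨?_, ?_⟩
  · exact isUnit_bigM n m E F uh ph α₁ α₂ β₁ β₂ hβ₁.ne' hβ₂.ne'
  · exact main_isLeast n m E hE F q r uh ph α₁ α₂ β₁ β₂ hα₁ hα₂ hβ₁ hβ₂

end GSPPBE
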